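/- arXiv:1603.05579 — 6 statements merged into one kernel-verified Lean document; each statement's English description precedes it below -/
import Mathlib

section
/- Assume each cost function c_y is continuous on Ω (Reg') and that for all y ≠ z in Y and every t ∈ ℝ the level set {x ∈ Ω : c(x,y) − c(x,z) = t} has Lebesgue measure zero (Twist'). Let ρ be a bounded probability density supported in a compact set X ⊆ Ω and let ν = ∑_{y∈Y} ν_y δ_y be a probability measure on Y. Then the Kantorovich functional Φ(ψ) = ∫_X min_{y∈Y}(c(x,y)+ψ(y)) ρ(x) dx − ∑_{y∈Y} ψ(y) ν_y is concave on ℝ^Y, continuously differentiable, and its gradient is given by ∂Φ/∂ψ(y) (ψ) = ∫_{Lag_y(ψ)} ρ(x) dx − ν_y for every y ∈ Y. -/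
open MeasureTheory Set Filter

set_option linter.unusedSectionVars false


section Aux
variable {Y : Type*} [Fintype Y] [Nonempty Y]

lemma aux_ciInf_le (f : Y → ℝ) (y : Y) : (⨅ z, f z) ≤ f y :=
  ciInf_le (Finite.bddBelow_range f) y

lemma aux_exists_min (f : Y → ℝ) : ∃ y, f y = ⨅ z, f z := exists_eq_ciInf_of_finite

lemma aux_coord_le (h : Y → ℝ) (y : Y) : h y ≤ ‖h‖ :=
  le_trans (le_abs_self _) (by simpa [Real.norm_eq_abs] using norm_le_pi_norm h y)

lemma aux_lip_one (f ψ φ : Y → ℝ) :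
    (⨅ y, f y + ψ y) ≤ (⨅ y, f y + φ y) + ‖ψ - φ‖ := by
  obtain ⟨y, hy⟩ := aux_exists_min (fun y => f y + φ y)
  have h1 : (⨅ z, f z + ψ z) ≤ f y + ψ y := aux_ciInf_le _ y
  have h2 : ψ y - φ y ≤ ‖ψ - φ‖ := by
    simpa using aux_coord_le (ψ - φ) y
  have h3 : f y + φ y = ⨅ z, f z + φ z := hy
  linarith

lemma aux_lip (f ψ φ : Y → ℝ) :
    |(⨅ y, f y + ψ y) - (⨅ y, f y + φ y)| ≤ ‖ψ - φ‖ := by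
  rw [abs_le]
  constructor
  · have := aux_lip_one f φ ψ; rw [norm_sub_rev] at this; linarith
  · have := aux_lip_one f ψ φ; linarith

lemma aux_concave (f ψ φ : Y → ℝ) {a b : ℝ} (ha : 0 ≤ a) (hb : 0 ≤ b) (hab : a + b = 1) :
    a * (⨅ y, f y + ψ y) + b * (⨅ y, f y + φ y) ≤ ⨅ y, f y + (a • ψ + b • φ) y := by
  apply le_ciInf; intro y
  have h1 : a * (⨅ z, f z + ψ z) ≤ a * (f y + ψ y) :=
    mul_le_mul_of_nonneg_left (aux_ciInf_le _ y) ha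
  have h2 : b * (⨅ z, f z + φ z) ≤ b * (f y + φ y) :=
    mul_le_mul_of_nonneg_left (aux_ciInf_le _ y) hb
  have h3 : (a • ψ + b • φ) y = a * ψ y + b * φ y := by simp
  have h4 : a * (f y + ψ y) + b * (f y + φ y) = f y + (a * ψ y + b * φ y) := by
    linear_combination f y * hab
  rw [h3]; linarith

lemma aux_shift (f ψ h : Y → ℝ) (y0 : Y)
    (hmin : ∀ z, f y0 + ψ y0 ≤ f z + ψ z)
    (hpert : ∀ z, f y0 + ψ y0 + h y0 ≤ f z + ψ z + h z) :
    (⨅ z, f z + (ψ + h) z) = (⨅ z, f z + ψ z) + h y0 := by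
  have e1 : (⨅ z, f z + (ψ + h) z) = f y0 + ψ y0 + h y0 := by
    apply le_antisymm
    · have := aux_ciInf_le (fun z => f z + (ψ + h) z) y0
      simpa [add_assoc] using this
    · apply le_ciInf; intro z
      have := hpert z; simp only [Pi.add_apply]; linarith
  have e2 : (⨅ z, f z + ψ z) = f y0 + ψ y0 :=
    le_antisymm (aux_ciInf_le _ y0) (le_ciInf hmin)
  rw [e1, e2]

lemma aux_inf'_eq (f : Y → ℝ) :
    (⨅ y, f y) = Finset.univ.inf' Finset.univ_nonempty f := by
  apply le_antisymm
  · obtain ⟨y, _, hy⟩ := Finset.exists_mem_eq_inf' Finset.univ_nonempty f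
    rw [hy]; exact aux_ciInf_le f y
  · exact le_ciInf fun y => Finset.inf'_le f (Finset.mem_univ y)

lemma aux_contOn_inf' {α : Type*} [TopologicalSpace α] (S : Set α) (g : Y → α → ℝ)
    (hg : ∀ y, ContinuousOn (g y) S) (s : Finset Y) (hs : s.Nonempty) :
    ContinuousOn (fun x => s.inf' hs (fun y => g y x)) S := by
  induction hs using Finset.Nonempty.cons_induction with
  | singleton a => simpa using hg a
  | cons a s h hs ih =>
    have : (fun x => (Finset.cons a s h).inf' (by simp) (fun y => g y x)) =
        fun x => (g a x) ⊓ (s.inf' hs (fun y => g y x)) := by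
      funext x; rw [Finset.inf'_cons]
    rw [show (fun x => (Finset.cons a s h).inf' _ (fun y => g y x)) =
        fun x => (g a x) ⊓ (s.inf' hs (fun y => g y x)) from this]
    exact (hg a).inf ih

end Aux



section Main
variable {d : ℕ} {Y : Type*} [Fintype Y] [Nonempty Y]

/-- Laguerre cell -/
def KFLag (Ω : Set (EuclideanSpace ℝ (Fin d))) (c : EuclideanSpace ℝ (Fin d) → Y → ℝ)
    (ψ : Y → ℝ) (y : Y) : Set (EuclideanSpace ℝ (Fin d)) :=
  {x ∈ Ω | ∀ z, c x y + ψ y ≤ c x z + ψ z}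

variable {Ω : Set (EuclideanSpace ℝ (Fin d))} {c : EuclideanSpace ℝ (Fin d) → Y → ℝ}

lemma KFLag_meas (hΩ : IsOpen Ω) (hReg : ∀ y : Y, ContinuousOn (fun x => c x y) Ω)
    (ψ : Y → ℝ) (y : Y) : MeasurableSet (KFLag Ω c ψ y) := by
  have heq : KFLag Ω c ψ y = ⋂ z, {x | x ∈ Ω ∧ c x y + ψ y ≤ c x z + ψ z} := by
    ext x
    simp only [KFLag, mem_sep_iff, mem_iInter, mem_setOf_eq, forall_and, forall_const]
  rw [heq]
  apply MeasurableSet.iInter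
  intro z
  have hopen : IsOpen (Ω ∩ (fun x => c x y - c x z) ⁻¹' Ioi (ψ z - ψ y)) :=
    ContinuousOn.isOpen_inter_preimage ((hReg y).sub (hReg z)) hΩ isOpen_Ioi
  have heq2 : {x | x ∈ Ω ∧ c x y + ψ y ≤ c x z + ψ z} =
      Ω \ (Ω ∩ (fun x => c x y - c x z) ⁻¹' Ioi (ψ z - ψ y)) := by
    ext x
    simp only [mem_setOf_eq, mem_diff, mem_inter_iff, mem_preimage, mem_Ioi, not_and, not_lt]
    constructor
    · rintro ⟨h1, h2⟩; exact ⟨h1, fun _ => by linarith⟩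
    · rintro ⟨h1, h2⟩; have := h2 h1; exact ⟨h1, by linarith⟩
  rw [heq2]
  exact hΩ.measurableSet.diff hopen.measurableSet

lemma KFnull (hTwist : ∀ y z : Y, y ≠ z → ∀ t : ℝ, volume {x ∈ Ω | c x y - c x z = t} = 0)
    (ψ : Y → ℝ) :
    volume {x | x ∈ Ω ∧ ∃ y z : Y, y ≠ z ∧ c x y + ψ y = c x z + ψ z} = 0 := by
  apply measure_mono_null
    (t := ⋃ y : Y, ⋃ z : Y, {x | x ∈ Ω ∧ (y ≠ z ∧ c x y - c x z = ψ z - ψ y)})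
  · rintro x ⟨hx, y, z, hyz, he⟩
    exact mem_iUnion.2 ⟨y, mem_iUnion.2 ⟨z, hx, hyz, by linarith⟩⟩
  · apply measure_iUnion_null; intro y; apply measure_iUnion_null; intro z
    by_cases hyz : y = z
    · have : {x | x ∈ Ω ∧ (y ≠ z ∧ c x y - c x z = ψ z - ψ y)} = ∅ := by
        ext x; simp [hyz]
      rw [this]; exact measure_empty
    · apply measure_mono_null _ (hTwist y z hyz (ψ z - ψ y))
      rintro x ⟨hx, _, he⟩; exact ⟨hx, he⟩

lemma KFmCont (hReg : ∀ y : Y, ContinuousOn (fun x => c x y) Ω) (ψ : Y → ℝ) :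
    ContinuousOn (fun x => ⨅ y : Y, (c x y + ψ y)) Ω := by
  have heq : (fun x => ⨅ y : Y, (c x y + ψ y)) =
      fun x => Finset.univ.inf' Finset.univ_nonempty (fun y => c x y + ψ y) :=
    funext fun x => aux_inf'_eq _
  rw [heq]
  exact aux_contOn_inf' Ω (fun y x => c x y + ψ y)
    (fun y => (hReg y).add continuousOn_const) _ _

lemma KFSel (ψ : Y → ℝ) (x : EuclideanSpace ℝ (Fin d)) (hxΩ : x ∈ Ω)
    (hxA : ∀ y z : Y, y ≠ z → c x y + ψ y ≠ c x z + ψ z) :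
    ∃ y0 : Y, (∀ z, c x y0 + ψ y0 ≤ c x z + ψ z) ∧
      (∀ z, z ≠ y0 → c x y0 + ψ y0 < c x z + ψ z) ∧
      (∀ y, x ∈ KFLag Ω c ψ y ↔ y = y0) := by
  obtain ⟨y0, hy0⟩ := aux_exists_min (fun y => c x y + ψ y)
  have hmin : ∀ z, c x y0 + ψ y0 ≤ c x z + ψ z := by
    intro z; rw [hy0]; exact aux_ciInf_le _ z
  have hstrict : ∀ z, z ≠ y0 → c x y0 + ψ y0 < c x z + ψ z := fun z hz =>
    lt_of_le_of_ne (hmin z) (hxA y0 z (Ne.symm hz))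
  refine ⟨y0, hmin, hstrict, ?_⟩
  intro y
  constructor
  · intro hy
    by_contra hne
    have h1 : c x y + ψ y ≤ c x y0 + ψ y0 := hy.2 y0
    have h2 := hstrict y hne
    linarith
  · rintro rfl; exact ⟨hxΩ, hmin⟩

end Main

section Main2
variable {d : ℕ} {Y : Type*} [Fintype Y] [Nonempty Y]
variable {Ω : Set (EuclideanSpace ℝ (Fin d))} {c : EuclideanSpace ℝ (Fin d) → Y → ℝ}
variable {X : Set (EuclideanSpace ℝ (Fin d))} {ρ : EuclideanSpace ℝ (Fin d) → ℝ} {Cρ : ℝ}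

lemma KFρind (hρsupp : ∀ x, x ∉ X → ρ x = 0) : ρ = X.indicator ρ := by
  funext x; by_cases hx : x ∈ X
  · simp [hx]
  · simp [hx, hρsupp x hx]

lemma KFρint (hX : IsCompact X) (hρmeas : Measurable ρ) (hρnn : ∀ x, 0 ≤ ρ x)
    (hρbd : ∀ x, ρ x ≤ Cρ) (hρsupp : ∀ x, x ∉ X → ρ x = 0) : Integrable ρ := by
  rw [KFρind hρsupp, integrable_indicator_iff hX.isClosed.measurableSet]
  apply Measure.integrableOn_of_bounded hX.measure_lt_top.ne hρmeas.aestronglyMeasurable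
    (M := Cρ)
  exact ae_of_all _ fun x => by
    rw [Real.norm_eq_abs, abs_of_nonneg (hρnn x)]; exact hρbd x

/-- set-integral of ρ over a measurable set equals integral of the indicator over X -/
lemma KFgX (hρsupp : ∀ x, x ∉ X → ρ x = 0) (hXmeas : MeasurableSet X)
    {S : Set (EuclideanSpace ℝ (Fin d))} (hS : MeasurableSet S) :
    ∫ x in S, ρ x = ∫ x in X, S.indicator ρ x := by
  rw [setIntegral_indicator hS]
  conv_lhs => rw [KFρind hρsupp]
  rw [setIntegral_indicator hXmeas, inter_comm]

lemma KFmIntOn (hX : IsCompact X) (hXΩ : X ⊆ Ω)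
    (hReg : ∀ y : Y, ContinuousOn (fun x => c x y) Ω)
    (hρmeas : Measurable ρ) (hρnn : ∀ x, 0 ≤ ρ x) (hρbd : ∀ x, ρ x ≤ Cρ) (ψ : Y → ℝ) :
    IntegrableOn (fun x => (⨅ y : Y, (c x y + ψ y)) * ρ x) X := by
  obtain ⟨M, hM⟩ := hX.exists_bound_of_continuousOn ((KFmCont hReg ψ).mono hXΩ)
  have hCρ0 : 0 ≤ Cρ := le_trans (hρnn 0) (hρbd 0)
  apply Integrable.mono' (g := fun _ => M * Cρ)
  · exact integrableOn_const hX.measure_lt_top.ne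
  · exact (((KFmCont hReg ψ).mono hXΩ).aestronglyMeasurable hX.isClosed.measurableSet).mul
      hρmeas.aestronglyMeasurable.restrict
  · rw [ae_restrict_iff' hX.isClosed.measurableSet]
    apply ae_of_all; intro x hx
    rw [Real.norm_eq_abs, abs_mul, abs_of_nonneg (hρnn x)]
    have h1 : |⨅ y : Y, (c x y + ψ y)| ≤ M := by
      simpa [Real.norm_eq_abs] using hM x hx
    exact mul_le_mul h1 (hρbd x) (hρnn x) (le_trans (abs_nonneg _) h1)

lemma KFaeA (hX : IsCompact X) (hXΩ : X ⊆ Ω)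
    (hTwist : ∀ y z : Y, y ≠ z → ∀ t : ℝ, volume {x ∈ Ω | c x y - c x z = t} = 0)
    (ψ : Y → ℝ) :
    ∀ᵐ x ∂(volume.restrict X),
      x ∈ Ω ∧ ∀ y z : Y, y ≠ z → c x y + ψ y ≠ c x z + ψ z := by
  rw [ae_restrict_iff' hX.isClosed.measurableSet, ae_iff]
  apply measure_mono_null _ (KFnull hTwist ψ)
  intro x hx
  rw [mem_setOf_eq] at hx ⊢
  push_neg at hx
  obtain ⟨hxX, hx2⟩ := hx
  have hxΩ : x ∈ Ω := hXΩ hxX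
  exact ⟨hxΩ, hx2 hxΩ⟩
end Main2

section Main3
variable {d : ℕ} {Y : Type*} [Fintype Y] [Nonempty Y]
variable {Ω : Set (EuclideanSpace ℝ (Fin d))} {c : EuclideanSpace ℝ (Fin d) → Y → ℝ}
variable {X : Set (EuclideanSpace ℝ (Fin d))} {ρ : EuclideanSpace ℝ (Fin d) → ℝ} {Cρ : ℝ}

lemma KFderiv (hΩ : IsOpen Ω) (hReg : ∀ y : Y, ContinuousOn (fun x => c x y) Ω)
    (hTwist : ∀ y z : Y, y ≠ z → ∀ t : ℝ, volume {x ∈ Ω | c x y - c x z = t} = 0)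
    (hX : IsCompact X) (hXΩ : X ⊆ Ω)
    (hρmeas : Measurable ρ) (hρnn : ∀ x, 0 ≤ ρ x) (hρbd : ∀ x, ρ x ≤ Cρ)
    (hρsupp : ∀ x, x ∉ X → ρ x = 0) (ψ : Y → ℝ) :
    HasFDerivAt (fun ψ' : Y → ℝ => ∫ x in X, (⨅ y : Y, (c x y + ψ' y)) * ρ x)
      (∑ y : Y, (∫ x in KFLag Ω c ψ y, ρ x) •
        (ContinuousLinearMap.proj y : ((Y → ℝ) →L[ℝ] ℝ))) ψ := by
  have hXmeas : MeasurableSet X := hX.isClosed.measurableSet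
  have hρInt : Integrable ρ := KFρint hX hρmeas hρnn hρbd hρsupp
  have hLagMeas : ∀ (ψ' : Y → ℝ) (y : Y), MeasurableSet (KFLag Ω c ψ' y) :=
    fun ψ' y => KFLag_meas hΩ hReg ψ' y
  set S : (Y → ℝ) → EuclideanSpace ℝ (Fin d) → ℝ :=
    fun h x => ∑ y : Y, (KFLag Ω c ψ y).indicator (fun _ => h y) x with hSdef
  have hSmeas : ∀ h, Measurable (S h) := fun h =>
    Finset.measurable_sum _ (fun y _ => measurable_const.indicator (hLagMeas ψ y))
  have hSIntOn : ∀ h : Y → ℝ, IntegrableOn (fun x => S h x * ρ x) X := by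
    intro h
    have e : (fun x => S h x * ρ x) =
        fun x => ∑ y : Y, (h y * (KFLag Ω c ψ y).indicator ρ x) := by
      funext x
      simp only [hSdef]
      rw [Finset.sum_mul]
      apply Finset.sum_congr rfl
      intro y _
      by_cases hx : x ∈ KFLag Ω c ψ y <;> simp [indicator, hx]
    rw [e]
    apply integrable_finset_sum
    intro y _
    exact ((hρInt.indicator (hLagMeas ψ y)).const_mul (h y)).integrableOn
  have hSint : ∀ h : Y → ℝ, ∫ x in X, S h x * ρ x
      = ∑ y : Y, (∫ x in KFLag Ω c ψ y, ρ x) * h y := by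
    intro h
    have e : (fun x => S h x * ρ x) =
        fun x => ∑ y : Y, (h y * (KFLag Ω c ψ y).indicator ρ x) := by
      funext x
      simp only [hSdef]
      rw [Finset.sum_mul]
      apply Finset.sum_congr rfl
      intro y _
      by_cases hx : x ∈ KFLag Ω c ψ y <;> simp [indicator, hx]
    rw [e, integral_finset_sum _
      (fun y _ => ((hρInt.indicator (hLagMeas ψ y)).const_mul (h y)).integrableOn)]
    apply Finset.sum_congr rfl
    intro y _
    rw [integral_const_mul, KFgX hρsupp hXmeas (hLagMeas ψ y), mul_comm]
  have hmInt : ∀ ψ' : Y → ℝ,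
      IntegrableOn (fun x => (⨅ y : Y, (c x y + ψ' y)) * ρ x) X :=
    fun ψ' => KFmIntOn hX hXΩ hReg hρmeas hρnn hρbd ψ'
  have hRepr : ∀ h : Y → ℝ,
      (∫ x in X, (⨅ y : Y, (c x y + (ψ + h) y)) * ρ x)
        - (∫ x in X, (⨅ y : Y, (c x y + ψ y)) * ρ x)
        - (∑ y : Y, (∫ x in KFLag Ω c ψ y, ρ x) •
            (ContinuousLinearMap.proj y : ((Y → ℝ) →L[ℝ] ℝ))) h
      = ∫ x in X,
          ((⨅ y : Y, (c x y + (ψ + h) y)) - (⨅ y : Y, (c x y + ψ y)) - S h x) * ρ x := by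
    intro h
    have e1 : (fun x => ((⨅ y : Y, (c x y + (ψ + h) y)) - (⨅ y : Y, (c x y + ψ y))
          - S h x) * ρ x)
        = fun x => ((⨅ y : Y, (c x y + (ψ + h) y)) * ρ x
            - (⨅ y : Y, (c x y + ψ y)) * ρ x) - S h x * ρ x := by
      funext x; ring
    have hsub : Integrable (fun x => (⨅ y : Y, (c x y + (ψ + h) y)) * ρ x
        - (⨅ y : Y, (c x y + ψ y)) * ρ x) (volume.restrict X) :=
      (hmInt (ψ + h)).sub (hmInt ψ)
    rw [e1, integral_sub hsub (hSIntOn h),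
      integral_sub (hmInt (ψ + h)) (hmInt ψ), hSint h]
    simp only [ContinuousLinearMap.coe_sum', Finset.sum_apply,
      ContinuousLinearMap.coe_smul', Pi.smul_apply, ContinuousLinearMap.proj_apply,
      smul_eq_mul]
  rw [hasFDerivAt_iff_isLittleO_nhds_zero]
  have key : (fun h : Y → ℝ => ∫ x in X,
        ((⨅ y : Y, (c x y + (ψ + h) y)) - (⨅ y : Y, (c x y + ψ y)) - S h x) * ρ x)
      =o[nhds (0 : Y → ℝ)] (fun h : Y → ℝ => ‖h‖) := by
    rw [Asymptotics.isLittleO_iff_tendsto']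
    · rw [Filter.tendsto_iff_seq_tendsto]
      intro u hu
      have hucoord : ∀ y : Y, Tendsto (fun n => u n y) atTop (nhds 0) := by
        intro y
        have := ((continuous_apply y).tendsto (0 : Y → ℝ)).comp hu
        simpa [Function.comp_def] using this
      have hnorm : Tendsto (fun n => ‖u n‖) atTop (nhds 0) := by
        simpa [Function.comp_def] using (continuous_norm.tendsto (0 : Y → ℝ)).comp hu
      -- the sequence of integrands
      set F : ℕ → EuclideanSpace ℝ (Fin d) → ℝ := fun n x =>
        ((⨅ y : Y, (c x y + (ψ + u n) y)) - (⨅ y : Y, (c x y + ψ y)) - S (u n) x)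
          * ρ x * (‖u n‖)⁻¹ with hFdef
      have hdom : Tendsto (fun n => ∫ x in X, F n x) atTop (nhds (∫ _x in X, (0:ℝ))) := by
        apply tendsto_integral_of_dominated_convergence (bound := fun x => 2 * ρ x)
        · intro n
          refine AEStronglyMeasurable.mul ?_ aestronglyMeasurable_const
          refine AEStronglyMeasurable.mul ?_ hρmeas.aestronglyMeasurable.restrict
          refine AEStronglyMeasurable.sub (AEStronglyMeasurable.sub ?_ ?_) ?_
          · exact ((KFmCont hReg (ψ + u n)).mono hXΩ).aestronglyMeasurable hXmeas
          · exact ((KFmCont hReg ψ).mono hXΩ).aestronglyMeasurable hXmeas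
          · exact (hSmeas (u n)).aestronglyMeasurable.restrict
        · exact hρInt.restrict.const_mul 2
        · intro n
          filter_upwards [KFaeA hX hXΩ hTwist ψ] with x hx
          obtain ⟨hxΩ, hxA⟩ := hx
          obtain ⟨y0, hmin, hstrict, hiff⟩ := KFSel ψ x hxΩ hxA
          have hSx : S (u n) x = u n y0 := by
            simp only [hSdef]
            rw [Finset.sum_eq_single y0]
            · simp [indicator, (hiff y0).2 rfl]
            · intro y _ hy
              have hnot : x ∉ KFLag Ω c ψ y := fun hmem => hy ((hiff y).1 hmem)
              simp [indicator, hnot]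
            · intro habs; exact absurd (Finset.mem_univ y0) habs
          have hlip : |(⨅ y : Y, (c x y + (ψ + u n) y)) - (⨅ y : Y, (c x y + ψ y))|
              ≤ ‖u n‖ := by
            have := aux_lip (fun y => c x y) (ψ + u n) ψ
            simpa [add_sub_cancel_left] using this
          have hS' : |S (u n) x| ≤ ‖u n‖ := by
            rw [hSx]
            simpa [Real.norm_eq_abs] using norm_le_pi_norm (u n) y0
          have habs : |(⨅ y : Y, (c x y + (ψ + u n) y)) - (⨅ y : Y, (c x y + ψ y))
              - S (u n) x| ≤ 2 * ‖u n‖ := by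
            have := abs_sub ((⨅ y : Y, (c x y + (ψ + u n) y)) - (⨅ y : Y, (c x y + ψ y)))
              (S (u n) x)
            calc |(⨅ y : Y, (c x y + (ψ + u n) y)) - (⨅ y : Y, (c x y + ψ y)) - S (u n) x|
                ≤ |(⨅ y : Y, (c x y + (ψ + u n) y)) - (⨅ y : Y, (c x y + ψ y))|
                    + |S (u n) x| := abs_sub _ _
              _ ≤ 2 * ‖u n‖ := by linarith
          simp only [hFdef]
          rcases eq_or_lt_of_le (norm_nonneg (u n)) with h0 | hpos
          · rw [← h0]
            simp [hρnn x]
          · rw [Real.norm_eq_abs, abs_mul, abs_mul, abs_of_nonneg (hρnn x),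
              abs_inv, abs_norm]
            rw [mul_inv_le_iff₀ hpos]
            calc |(⨅ y : Y, (c x y + (ψ + u n) y)) - (⨅ y : Y, (c x y + ψ y)) - S (u n) x| * ρ x
                ≤ (2 * ‖u n‖) * ρ x := mul_le_mul_of_nonneg_right habs (hρnn x)
              _ = 2 * ρ x * ‖u n‖ := by ring
        · filter_upwards [KFaeA hX hXΩ hTwist ψ] with x hx
          obtain ⟨hxΩ, hxA⟩ := hx
          obtain ⟨y0, hmin, hstrict, hiff⟩ := KFSel ψ x hxΩ hxA
          have hSx : ∀ n, S (u n) x = u n y0 := by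
            intro n
            simp only [hSdef]
            rw [Finset.sum_eq_single y0]
            · simp [indicator, (hiff y0).2 rfl]
            · intro y _ hy
              have hnot : x ∉ KFLag Ω c ψ y := fun hmem => hy ((hiff y).1 hmem)
              simp [indicator, hnot]
            · intro habs; exact absurd (Finset.mem_univ y0) habs
          have hev : ∀ᶠ n in atTop, ∀ z : Y,
              c x y0 + ψ y0 + u n y0 ≤ c x z + ψ z + u n z := by
            rw [eventually_all]
            intro z
            by_cases hz : z = y0
            · subst hz; exact Eventually.of_forall fun n => le_refl _
            · have hgap := hstrict z hz
              have ht : Tendsto (fun n => u n y0 - u n z) atTop (nhds 0) := by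
                simpa using (hucoord y0).sub (hucoord z)
              have hevlt := ht.eventually_lt_const
                (show (0:ℝ) < (c x z + ψ z) - (c x y0 + ψ y0) by linarith)
              filter_upwards [hevlt] with n hn
              linarith
          have hFz : ∀ᶠ n in atTop, F n x = 0 := by
            filter_upwards [hev] with n hn
            have hshift := aux_shift (fun y => c x y) ψ (u n) y0 hmin hn
            have hshift' : (⨅ y : Y, (c x y + (ψ y + u n y)))
                = (⨅ y : Y, (c x y + ψ y)) + u n y0 := by simpa using hshift
            simp only [hFdef, Pi.add_apply, hSx n]
            rw [hshift']
            ring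
          exact Tendsto.congr' (hFz.mono fun n hn => hn.symm) tendsto_const_nhds
      rw [integral_zero] at hdom
      have hcomp : ((fun h : Y → ℝ => (∫ x in X,
          ((⨅ y : Y, (c x y + (ψ + h) y)) - (⨅ y : Y, (c x y + ψ y)) - S h x) * ρ x)
            / ‖h‖) ∘ u) = fun n => ∫ x in X, F n x := by
        funext n
        simp only [Function.comp, hFdef]
        rw [div_eq_mul_inv, ← integral_mul_const]
      rw [hcomp]
      exact hdom
    · apply Eventually.of_forall
      intro h h0
      have h00 : h = 0 := by rwa [norm_eq_zero] at h0
      subst h00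
      have e0 : (fun x : EuclideanSpace ℝ (Fin d) =>
          ((⨅ y : Y, (c x y + (ψ + 0) y)) - (⨅ y : Y, (c x y + ψ y)) - S 0 x) * ρ x)
          = fun _ => (0:ℝ) := by
        funext x
        simp [hSdef]
      rw [e0, integral_zero]
  have key2 := Asymptotics.isLittleO_norm_right.mp key
  have heq : (fun h : Y → ℝ =>
      (∫ x in X, (⨅ y : Y, (c x y + (ψ + h) y)) * ρ x)
        - (∫ x in X, (⨅ y : Y, (c x y + ψ y)) * ρ x)
        - (∑ y : Y, (∫ x in KFLag Ω c ψ y, ρ x) •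
            (ContinuousLinearMap.proj y : ((Y → ℝ) →L[ℝ] ℝ))) h)
      = fun h : Y → ℝ => ∫ x in X,
          ((⨅ y : Y, (c x y + (ψ + h) y)) - (⨅ y : Y, (c x y + ψ y)) - S h x) * ρ x :=
    funext hRepr
  exact heq ▸ key2

end Main3

section Main4
variable {d : ℕ} {Y : Type*} [Fintype Y] [Nonempty Y]
variable {Ω : Set (EuclideanSpace ℝ (Fin d))} {c : EuclideanSpace ℝ (Fin d) → Y → ℝ}
variable {X : Set (EuclideanSpace ℝ (Fin d))} {ρ : EuclideanSpace ℝ (Fin d) → ℝ} {Cρ : ℝ}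

lemma KFgcont (hΩ : IsOpen Ω) (hReg : ∀ y : Y, ContinuousOn (fun x => c x y) Ω)
    (hTwist : ∀ y z : Y, y ≠ z → ∀ t : ℝ, volume {x ∈ Ω | c x y - c x z = t} = 0)
    (hX : IsCompact X) (hXΩ : X ⊆ Ω)
    (hρmeas : Measurable ρ) (hρnn : ∀ x, 0 ≤ ρ x) (hρbd : ∀ x, ρ x ≤ Cρ)
    (hρsupp : ∀ x, x ∉ X → ρ x = 0) (y : Y) :
    Continuous (fun ψ : Y → ℝ => ∫ x in KFLag Ω c ψ y, ρ x) := by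
  have hXmeas : MeasurableSet X := hX.isClosed.measurableSet
  have hρInt : Integrable ρ := KFρint hX hρmeas hρnn hρbd hρsupp
  have hLagMeas : ∀ (ψ' : Y → ℝ) (y' : Y), MeasurableSet (KFLag Ω c ψ' y') :=
    fun ψ' y' => KFLag_meas hΩ hReg ψ' y'
  have hrep : ∀ ψ' : Y → ℝ,
      ∫ x in KFLag Ω c ψ' y, ρ x = ∫ x in X, (KFLag Ω c ψ' y).indicator ρ x :=
    fun ψ' => KFgX hρsupp hXmeas (hLagMeas ψ' y)
  rw [continuous_iff_seqContinuous]
  intro u ψ hu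
  have hcoord : ∀ z : Y, Tendsto (fun n => u n z) atTop (nhds (ψ z)) := by
    intro z
    exact ((continuous_apply z).tendsto ψ).comp hu
  have hdom : Tendsto (fun n => ∫ x in X, (KFLag Ω c (u n) y).indicator ρ x) atTop
      (nhds (∫ x in X, (KFLag Ω c ψ y).indicator ρ x)) := by
    apply tendsto_integral_of_dominated_convergence (bound := ρ)
    · intro n
      exact (hρmeas.indicator (hLagMeas (u n) y)).aestronglyMeasurable.restrict
    · exact hρInt.restrict
    · intro n
      apply ae_of_all
      intro x
      by_cases hx : x ∈ KFLag Ω c (u n) y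
      · rw [indicator_of_mem hx, Real.norm_eq_abs, abs_of_nonneg (hρnn x)]
      · rw [indicator_of_notMem hx]
        simpa using hρnn x
    · filter_upwards [KFaeA hX hXΩ hTwist ψ] with x hx
      obtain ⟨hxΩ, hxA⟩ := hx
      obtain ⟨y0, hmin, hstrict, hiff⟩ := KFSel ψ x hxΩ hxA
      by_cases hy : y = y0
      · subst hy
        have hxmem : x ∈ KFLag Ω c ψ y := (hiff y).2 rfl
        have hev : ∀ᶠ n in atTop, x ∈ KFLag Ω c (u n) y := by
          have hall : ∀ᶠ n in atTop, ∀ z : Y, c x y + u n y ≤ c x z + u n z := by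
            rw [eventually_all]
            intro z
            by_cases hz : z = y
            · subst hz; exact Eventually.of_forall fun n => le_refl _
            · have hgap := hstrict z hz
              have h1 : Tendsto (fun n => c x y + u n y) atTop (nhds (c x y + ψ y)) :=
                tendsto_const_nhds.add (hcoord y)
              have h2 : Tendsto (fun n => c x z + u n z) atTop (nhds (c x z + ψ z)) :=
                tendsto_const_nhds.add (hcoord z)
              filter_upwards [h1.eventually_lt h2 hgap] with n hn
              exact le_of_lt hn
          filter_upwards [hall] with n hn
          exact ⟨hxΩ, hn⟩
        have hevq : ∀ᶠ n in atTop,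
            (KFLag Ω c (u n) y).indicator ρ x = (KFLag Ω c ψ y).indicator ρ x := by
          filter_upwards [hev] with n hn
          rw [indicator_of_mem hn, indicator_of_mem hxmem]
        exact Tendsto.congr' (hevq.mono fun n hn => hn.symm) tendsto_const_nhds
      · have hxnot : x ∉ KFLag Ω c ψ y := fun hmem => hy ((hiff y).1 hmem)
        have hev : ∀ᶠ n in atTop, x ∉ KFLag Ω c (u n) y := by
          have h1 : Tendsto (fun n => c x y0 + u n y0) atTop (nhds (c x y0 + ψ y0)) :=
            tendsto_const_nhds.add (hcoord y0)
          have h2 : Tendsto (fun n => c x y + u n y) atTop (nhds (c x y + ψ y)) :=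
            tendsto_const_nhds.add (hcoord y)
          have hgap := hstrict y hy
          filter_upwards [h1.eventually_lt h2 hgap] with n hn hmem
          exact absurd (hmem.2 y0) (not_le.2 hn)
        have hevq : ∀ᶠ n in atTop,
            (KFLag Ω c (u n) y).indicator ρ x = (KFLag Ω c ψ y).indicator ρ x := by
          filter_upwards [hev] with n hn
          rw [indicator_of_notMem hn, indicator_of_notMem hxnot]
        exact Tendsto.congr' (hevq.mono fun n hn => hn.symm) tendsto_const_nhds
  have hcomp : ((fun ψ' : Y → ℝ => ∫ x in KFLag Ω c ψ' y, ρ x) ∘ u)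
      = fun n => ∫ x in X, (KFLag Ω c (u n) y).indicator ρ x :=
    funext fun n => hrep (u n)
  rw [hcomp]
  have hψ : (fun ψ' : Y → ℝ => ∫ x in KFLag Ω c ψ' y, ρ x) ψ
      = ∫ x in X, (KFLag Ω c ψ y).indicator ρ x := hrep ψ
  rw [hψ]
  exact hdom

end Main4

/-- Theorem (Aurenhammer, generalized): under (Reg') and (Twist'), the Kantorovich
functional is concave, C¹, and its gradient is `ρ(Lag_y(ψ)) - ν_y`. -/
theorem kantorovich_functional_concave_C1_gradient
    (d : ℕ) (Ω : Set (EuclideanSpace ℝ (Fin d))) (hΩ : IsOpen Ω)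
    (Y : Type*) [Fintype Y] [Nonempty Y]
    (c : EuclideanSpace ℝ (Fin d) → Y → ℝ)
    -- (Reg') : each cost function is continuous on Ω
    (hReg : ∀ y : Y, ContinuousOn (fun x => c x y) Ω)
    -- (Twist') : level sets of differences of costs are Lebesgue-negligible
    (hTwist : ∀ y z : Y, y ≠ z → ∀ t : ℝ,
      volume {x ∈ Ω | c x y - c x z = t} = 0)
    -- X is a compact subset of Ω
    (X : Set (EuclideanSpace ℝ (Fin d))) (hX : IsCompact X) (hXΩ : X ⊆ Ω)
    -- ρ is a bounded probability density supported in X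
    (ρ : EuclideanSpace ℝ (Fin d) → ℝ) (hρmeas : Measurable ρ)
    (hρnn : ∀ x, 0 ≤ ρ x) (Cρ : ℝ) (hρbd : ∀ x, ρ x ≤ Cρ)
    (hρsupp : ∀ x, x ∉ X → ρ x = 0)
    (hρint : ∫ x in X, ρ x = 1)
    -- ν = ∑_y ν_y δ_y is a probability measure on Y
    (ν : Y → ℝ) (hνnn : ∀ y, 0 ≤ ν y) (hν1 : ∑ y, ν y = 1)
    -- the Kantorovich functional
    (Φ : (Y → ℝ) → ℝ)
    (hΦ : ∀ ψ : Y → ℝ,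
      Φ ψ = (∫ x in X, (⨅ y : Y, (c x y + ψ y)) * ρ x) - ∑ y, ψ y * ν y) :
    ConcaveOn ℝ univ Φ ∧ ContDiff ℝ 1 Φ ∧
      ∀ ψ v : Y → ℝ,
        fderiv ℝ Φ ψ v =
          ∑ y, ((∫ x in {x ∈ Ω | ∀ z : Y, c x y + ψ y ≤ c x z + ψ z}, ρ x) - ν y) * v y := by
  have hΦeq : Φ = fun ψ : Y → ℝ =>
      (∫ x in X, (⨅ y : Y, (c x y + ψ y)) * ρ x) - ∑ y, ψ y * ν y := funext hΦ
  have hXmeas : MeasurableSet X := hX.isClosed.measurableSet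
  have hmInt : ∀ ψ : Y → ℝ,
      IntegrableOn (fun x => (⨅ y : Y, (c x y + ψ y)) * ρ x) X :=
    fun ψ => KFmIntOn hX hXΩ hReg hρmeas hρnn hρbd ψ
  -- the constant linear part
  set Lν : (Y → ℝ) →L[ℝ] ℝ :=
      ∑ y : Y, ν y • (ContinuousLinearMap.proj y : ((Y → ℝ) →L[ℝ] ℝ)) with hLν
  have hLνapp : ∀ ψ : Y → ℝ, Lν ψ = ∑ y, ψ y * ν y := by
    intro ψ
    simp only [hLν, ContinuousLinearMap.coe_sum', Finset.sum_apply,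
      ContinuousLinearMap.coe_smul', Pi.smul_apply, ContinuousLinearMap.proj_apply,
      smul_eq_mul]
    exact Finset.sum_congr rfl fun y _ => mul_comm _ _
  have hT : ∀ ψ : Y → ℝ, HasFDerivAt (fun ψ' : Y → ℝ => ∑ y, ψ' y * ν y) Lν ψ := by
    intro ψ
    have : (⇑Lν : (Y → ℝ) → ℝ) = fun ψ' : Y → ℝ => ∑ y, ψ' y * ν y := funext hLνapp
    rw [← this]
    exact Lν.hasFDerivAt
  -- total derivative
  have hDer : ∀ ψ : Y → ℝ, HasFDerivAt Φ
      ((∑ y : Y, (∫ x in KFLag Ω c ψ y, ρ x) •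
        (ContinuousLinearMap.proj y : ((Y → ℝ) →L[ℝ] ℝ))) - Lν) ψ := by
    intro ψ
    rw [hΦeq]
    exact (KFderiv hΩ hReg hTwist hX hXΩ hρmeas hρnn hρbd hρsupp ψ).sub (hT ψ)
  have hfder : ∀ ψ : Y → ℝ, fderiv ℝ Φ ψ =
      (∑ y : Y, (∫ x in KFLag Ω c ψ y, ρ x) •
        (ContinuousLinearMap.proj y : ((Y → ℝ) →L[ℝ] ℝ))) - Lν :=
    fun ψ => (hDer ψ).fderiv
  refine ⟨?_, ?_, ?_⟩
  · -- concavity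
    refine ⟨convex_univ, ?_⟩
    intro ψ _ φ _ a b ha hb hab
    rw [hΦ, hΦ, hΦ]
    have hint : ∫ x in X, (a * (⨅ y : Y, (c x y + ψ y)) + b * (⨅ y : Y, (c x y + φ y))) * ρ x
        ≤ ∫ x in X, (⨅ y : Y, (c x y + (a • ψ + b • φ) y)) * ρ x := by
      apply setIntegral_mono_on
      · have e : (fun x => (a * (⨅ y : Y, (c x y + ψ y)) + b * (⨅ y : Y, (c x y + φ y))) * ρ x)
            = fun x => a * ((⨅ y : Y, (c x y + ψ y)) * ρ x)
                + b * ((⨅ y : Y, (c x y + φ y)) * ρ x) := by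
          funext x; ring
        rw [e]
        exact ((hmInt ψ).const_mul a).add ((hmInt φ).const_mul b)
      · exact hmInt _
      · exact hXmeas
      · intro x _
        exact mul_le_mul_of_nonneg_right
          (aux_concave (fun y => c x y) ψ φ ha hb hab) (hρnn x)
    have hsplit : ∫ x in X, (a * (⨅ y : Y, (c x y + ψ y)) + b * (⨅ y : Y, (c x y + φ y))) * ρ x
        = a * (∫ x in X, (⨅ y : Y, (c x y + ψ y)) * ρ x)
          + b * (∫ x in X, (⨅ y : Y, (c x y + φ y)) * ρ x) := by
      have e : (fun x => (a * (⨅ y : Y, (c x y + ψ y)) + b * (⨅ y : Y, (c x y + φ y))) * ρ x)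
          = fun x => a * ((⨅ y : Y, (c x y + ψ y)) * ρ x)
              + b * ((⨅ y : Y, (c x y + φ y)) * ρ x) := by
        funext x; ring
      rw [e, integral_add ((hmInt ψ).const_mul a) ((hmInt φ).const_mul b),
        integral_const_mul, integral_const_mul]
    have hlin : ∑ y, (a • ψ + b • φ) y * ν y
        = a * (∑ y, ψ y * ν y) + b * (∑ y, φ y * ν y) := by
      rw [Finset.mul_sum, Finset.mul_sum, ← Finset.sum_add_distrib]
      apply Finset.sum_congr rfl
      intro y _
      simp only [Pi.add_apply, Pi.smul_apply, smul_eq_mul]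
      ring
    simp only [smul_eq_mul]
    rw [hlin]
    linarith
  · -- C¹
    rw [contDiff_one_iff_fderiv]
    refine ⟨fun ψ => (hDer ψ).differentiableAt, ?_⟩
    have hcont : Continuous (fun ψ : Y → ℝ =>
        (∑ y : Y, (∫ x in KFLag Ω c ψ y, ρ x) •
          (ContinuousLinearMap.proj y : ((Y → ℝ) →L[ℝ] ℝ))) - Lν) := by
      apply Continuous.sub _ continuous_const
      apply continuous_finset_sum
      intro y _
      exact (KFgcont hΩ hReg hTwist hX hXΩ hρmeas hρnn hρbd hρsupp y).smul
        continuous_const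
    exact hcont.congr fun ψ => (hfder ψ).symm
  · -- gradient formula
    intro ψ v
    rw [hfder ψ]
    have hLag : ∀ y : Y, {x ∈ Ω | ∀ z : Y, c x y + ψ y ≤ c x z + ψ z} = KFLag Ω c ψ y :=
      fun y => rfl
    simp only [ContinuousLinearMap.coe_sub', Pi.sub_apply,
      ContinuousLinearMap.coe_sum', Finset.sum_apply, ContinuousLinearMap.coe_smul',
      Pi.smul_apply, ContinuousLinearMap.proj_apply, smul_eq_mul, hLνapp v, hLag,
      sub_mul, Finset.sum_sub_distrib]
    apply congrArg
    exact Finset.sum_congr rfl fun y _ => mul_comm _ _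
end

section
/- Assume each cost function c_y is continuous on Ω (Reg') and that for all y ≠ z in Y and every t ∈ ℝ the level set {x ∈ Ω : c(x,y) − c(x,z) = t} has Lebesgue measure zero (Twist'). Let ρ be a bounded probability density supported in a compact set X ⊆ Ω and ν = ∑_{y∈Y} ν_y δ_y a probability measure on Y. Then ψ : Y → ℝ is a global maximizer of the Kantorovich functional Φ if and only if ∫_{Lag_y(ψ)} ρ(x) dx = ν_y for every y ∈ Y. -/
open MeasureTheory Set

private lemma aux_measurableSet_le {E : Type*} [MeasurableSpace E] [TopologicalSpace E]
    [OpensMeasurableSpace E] {Ω : Set E} (hΩ : IsOpen Ω) {f : E → ℝ} (hf : ContinuousOn f Ω)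
    (a : ℝ) : MeasurableSet {x ∈ Ω | f x ≤ a} := by
  have h1 : IsOpen (Ω ∩ f ⁻¹' Set.Ioi a) := hf.isOpen_inter_preimage hΩ isOpen_Ioi
  have h2 : {x ∈ Ω | f x ≤ a} = Ω \ (Ω ∩ f ⁻¹' Set.Ioi a) := by
    ext x
    simp only [Set.mem_setOf_eq, Set.mem_diff, Set.mem_inter_iff, Set.mem_preimage,
      Set.mem_Ioi, not_and, not_lt]
    constructor
    · rintro ⟨hx1, hx2⟩; exact ⟨hx1, fun _ => hx2⟩
    · rintro ⟨hx1, hx2⟩; exact ⟨hx1, hx2 hx1⟩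
  rw [h2]; exact hΩ.measurableSet.diff h1.measurableSet

private lemma aux_aemeasurable_inf {E : Type*} [MeasurableSpace E] {μ : MeasureTheory.Measure E}
    {Y : Type*} [Fintype Y] [Nonempty Y] {g : Y → E → ℝ}
    (hg : ∀ y, AEMeasurable (g y) μ) : AEMeasurable (fun x => ⨅ y, g y x) μ := by
  have h : ∀ (s : Finset Y) (hs : s.Nonempty),
      AEMeasurable (fun x => s.inf' hs fun y => g y x) μ := by
    intro s hs
    induction hs using Finset.Nonempty.cons_induction with
    | singleton a => simpa using hg a
    | cons a s ha hs ih =>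
      have : (fun x => (Finset.cons a s ha).inf' (Finset.cons_nonempty ha) fun y => g y x)
          = fun x => g a x ⊓ (s.inf' hs fun y => g y x) := by
        funext x; exact Finset.inf'_cons hs (f := fun y => g y x)
      rw [this]
      exact (hg a).inf ih
  have h2 := h Finset.univ Finset.univ_nonempty
  have h3 : (fun x => ⨅ y, g y x)
      = fun x => Finset.univ.inf' Finset.univ_nonempty fun y => g y x := by
    funext x; exact (Finset.inf'_univ_eq_ciInf _).symm
  rw [h3]; exact h2
/-- Corollary: ψ maximizes the Kantorovich functional Φ iff every Laguerre cell
carries exactly the prescribed mass ν_y. -/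
theorem kantorovich_maximizer_iff_prescribed_masses
    (d : ℕ) (Ω : Set (EuclideanSpace ℝ (Fin d))) (hΩ : IsOpen Ω)
    (Y : Type*) [Fintype Y] [Nonempty Y]
    (c : EuclideanSpace ℝ (Fin d) → Y → ℝ)
    -- (Reg') : each cost function is continuous on Ω
    (hReg : ∀ y : Y, ContinuousOn (fun x => c x y) Ω)
    -- (Twist') : level sets of differences of costs are Lebesgue-negligible
    (hTwist : ∀ y z : Y, y ≠ z → ∀ t : ℝ,
      volume {x ∈ Ω | c x y - c x z = t} = 0)
    -- X is a compact subset of Ω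
    (X : Set (EuclideanSpace ℝ (Fin d))) (hX : IsCompact X) (hXΩ : X ⊆ Ω)
    -- ρ is a bounded probability density supported in X
    (ρ : EuclideanSpace ℝ (Fin d) → ℝ) (hρmeas : Measurable ρ)
    (hρnn : ∀ x, 0 ≤ ρ x) (Cρ : ℝ) (hρbd : ∀ x, ρ x ≤ Cρ)
    (hρsupp : ∀ x, x ∉ X → ρ x = 0)
    (hρint : ∫ x in X, ρ x = 1)
    -- ν = ∑_y ν_y δ_y is a probability measure on Y
    (ν : Y → ℝ) (hνnn : ∀ y, 0 ≤ ν y) (hν1 : ∑ y, ν y = 1)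
    -- the Kantorovich functional
    (Φ : (Y → ℝ) → ℝ)
    (hΦ : ∀ ψ : Y → ℝ,
      Φ ψ = (∫ x in X, (⨅ y : Y, (c x y + ψ y)) * ρ x) - ∑ y, ψ y * ν y)
    (ψ : Y → ℝ) :
    (∀ φ : Y → ℝ, Φ φ ≤ Φ ψ) ↔
      (∀ y : Y, (∫ x in {x ∈ Ω | ∀ z : Y, c x y + ψ y ≤ c x z + ψ z}, ρ x) = ν y) := by
  classical
  have hΩm : MeasurableSet Ω := hΩ.measurableSet
  have hXm : MeasurableSet X := hX.measurableSet
  have hCρ0 : 0 ≤ Cρ := le_trans (hρnn 0) (hρbd 0)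
  set L : Y → Set (EuclideanSpace ℝ (Fin d)) :=
    fun y => {x ∈ Ω | ∀ z : Y, c x y + ψ y ≤ c x z + ψ z} with hLdef
  have hLm : ∀ y, MeasurableSet (L y) := by
    intro y
    have h : L y = ⋂ z : Y, {x ∈ Ω | c x y - c x z ≤ ψ z - ψ y} := by
      ext x
      simp only [hLdef, mem_setOf_eq, mem_iInter]
      constructor
      · rintro ⟨hxΩ, h⟩ z; exact ⟨hxΩ, by have := h z; linarith⟩
      · intro h
        obtain ⟨hxΩ, -⟩ := h (Classical.arbitrary Y)
        exact ⟨hxΩ, fun z => by have := (h z).2; linarith⟩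
    rw [h]
    exact MeasurableSet.iInter fun z => aux_measurableSet_le hΩ ((hReg y).sub (hReg z)) _
  have hLΩ : ∀ y, L y ⊆ Ω := fun y x hx => hx.1
  have hnull : ∀ y z, y ≠ z → volume (L y ∩ L z) = 0 := by
    intro y z hyz
    refine measure_mono_null ?_ (hTwist y z hyz (ψ z - ψ y))
    rintro x ⟨⟨hxΩ, h1⟩, ⟨-, h2⟩⟩
    exact ⟨hxΩ, by have := h1 z; have := h2 y; linarith⟩
  set rank : Y → ℕ := fun y => (Fintype.equivFin Y y : ℕ) with hrank
  have hrank_inj : ∀ {y z : Y}, rank y = rank z → y = z := by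
    intro y z h
    exact (Fintype.equivFin Y).injective (Fin.val_injective h)
  set P : Y → Set (EuclideanSpace ℝ (Fin d)) :=
    fun y => L y \ ⋃ (z : Y) (_ : rank z < rank y), L z with hPdef
  have hPL : ∀ y, P y ⊆ L y := fun y => diff_subset
  have hPm : ∀ y, MeasurableSet (P y) := fun y =>
    (hLm y).diff (MeasurableSet.iUnion fun z => MeasurableSet.iUnion fun _ => hLm z)
  have hPdisj : ∀ y z, y ≠ z → ∀ x, x ∈ P y → x ∈ P z → False := by
    intro y z hyz x hxy hxz
    rcases lt_trichotomy (rank y) (rank z) with h | h | h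
    · exact hxz.2 (mem_iUnion.2 ⟨y, mem_iUnion.2 ⟨h, hxy.1⟩⟩)
    · exact hyz (hrank_inj h)
    · exact hxy.2 (mem_iUnion.2 ⟨z, mem_iUnion.2 ⟨h, hxz.1⟩⟩)
  have hPcover : ∀ x ∈ Ω, ∃ y, x ∈ P y := by
    intro x hx
    have hne : (Finset.univ.filter fun y => x ∈ L y).Nonempty := by
      obtain ⟨y0, -, hy0⟩ := Finset.exists_min_image Finset.univ (fun y => c x y + ψ y)
        ⟨Classical.arbitrary Y, Finset.mem_univ _⟩
      exact ⟨y0, Finset.mem_filter.2 ⟨Finset.mem_univ _,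
        ⟨hx, fun z => hy0 z (Finset.mem_univ z)⟩⟩⟩
    obtain ⟨y, hyF, hymin⟩ := Finset.exists_min_image _ (fun y => rank y) hne
    refine ⟨y, ⟨(Finset.mem_filter.1 hyF).2, fun hmem => ?_⟩⟩
    obtain ⟨z, hz⟩ := mem_iUnion.1 hmem
    obtain ⟨hzr, hzL⟩ := mem_iUnion.1 hz
    have := hymin z (Finset.mem_filter.2 ⟨Finset.mem_univ _, hzL⟩)
    omega
  have hLPnull : ∀ y, volume (L y \ P y) = 0 := by
    intro y
    have hsub : L y \ P y ⊆ ⋃ (z : Y), ⋃ (_ : z ≠ y), (L y ∩ L z) := by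
      rintro x ⟨hxL, hxP⟩
      have hmem : x ∈ ⋃ (z : Y), ⋃ (_ : rank z < rank y), L z := by
        by_contra hc; exact hxP ⟨hxL, hc⟩
      obtain ⟨z, hz⟩ := mem_iUnion.1 hmem
      obtain ⟨hzr, hzL⟩ := mem_iUnion.1 hz
      have hzy : z ≠ y := fun h => by subst h; omega
      exact mem_iUnion.2 ⟨z, mem_iUnion.2 ⟨hzy, ⟨hxL, hzL⟩⟩⟩
    exact measure_mono_null hsub
      (measure_iUnion_null fun z => measure_iUnion_null fun hz => hnull y z (Ne.symm hz))
  have hρX : IntegrableOn ρ X := by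
    refine Integrable.mono' (g := fun _ => Cρ)
      (integrableOn_const hX.measure_lt_top.ne)
      hρmeas.aestronglyMeasurable.restrict ?_
    exact ae_of_all _ fun x => by
      rw [Real.norm_eq_abs, abs_of_nonneg (hρnn x)]; exact hρbd x
  have hρs : ∀ s, IntegrableOn ρ (X ∩ s) := fun s => hρX.mono_set inter_subset_left
  have hmul : ∀ (h : EuclideanSpace ℝ (Fin d) → ℝ),
      AEStronglyMeasurable h (volume.restrict X) → (∃ M, ∀ x ∈ X, |h x| ≤ M) →
      IntegrableOn (fun x => h x * ρ x) X := by
    rintro h hm ⟨M, hM⟩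
    refine Integrable.mono' (g := fun _ => |M| * Cρ)
      (integrableOn_const hX.measure_lt_top.ne)
      (hm.mul hρmeas.aestronglyMeasurable.restrict) ?_
    refine (ae_restrict_iff' hXm).2 (ae_of_all _ fun x hx => ?_)
    rw [Real.norm_eq_abs, abs_mul]
    have h1 : |h x| ≤ |M| := (hM x hx).trans (le_abs_self M)
    have h2 : |ρ x| ≤ Cρ := by rw [abs_of_nonneg (hρnn x)]; exact hρbd x
    exact mul_le_mul h1 h2 (abs_nonneg _) (abs_nonneg _)
  have hcmX : ∀ y, AEMeasurable (fun x => c x y) (volume.restrict X) :=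
    fun y => ((hReg y).mono hXΩ).aemeasurable hXm
  have hcbd : ∀ y : Y, ∃ M, ∀ x ∈ X, |c x y| ≤ M := by
    intro y
    obtain ⟨M, hM⟩ := hX.exists_bound_of_continuousOn ((hReg y).mono hXΩ)
    exact ⟨M, fun x hx => by simpa [Real.norm_eq_abs] using hM x hx⟩
  choose Mc hMc using hcbd
  have hbddR : ∀ (φ : Y → ℝ) (x : EuclideanSpace ℝ (Fin d)),
      BddBelow (Set.range fun y => c x y + φ y) :=
    fun φ x => (Set.finite_range _).bddBelow
  have hIc : ∀ y, IntegrableOn (fun x => c x y * ρ x) X :=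
    fun y => hmul _ (hcmX y).aestronglyMeasurable ⟨Mc y, hMc y⟩
  have hIinf : ∀ φ : Y → ℝ, IntegrableOn (fun x => (⨅ y, c x y + φ y) * ρ x) X := by
    intro φ
    refine hmul _ (aux_aemeasurable_inf fun y => (hcmX y).add_const (φ y)).aestronglyMeasurable ?_
    refine ⟨Finset.univ.sup' Finset.univ_nonempty (fun y => Mc y + |φ y|), fun x hx => ?_⟩
    have hub : ∀ y, |c x y + φ y|
        ≤ Finset.univ.sup' Finset.univ_nonempty (fun y => Mc y + |φ y|) := fun y =>
      le_trans (le_trans (abs_add_le _ _) (add_le_add (hMc y x hx) (le_refl _)))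
        (Finset.le_sup' (fun z => Mc z + |φ z|) (Finset.mem_univ y))
    rw [abs_le]
    constructor
    · refine le_ciInf fun y => ?_
      have := (abs_le.1 (hub y)).1; linarith
    · have y0 := Classical.arbitrary Y
      exact le_trans (ciInf_le (hbddR φ x) y0) (le_trans (le_abs_self _) (hub y0))
  have hIyφ : ∀ (y : Y) (φ : Y → ℝ), IntegrableOn (fun x => (c x y + φ y) * ρ x) X := by
    intro y φ
    refine hmul _ ((hcmX y).add_const (φ y)).aestronglyMeasurable
      ⟨Mc y + |φ y|, fun x hx => ?_⟩
    exact le_trans (abs_add_le _ _) (add_le_add (hMc y x hx) (le_refl _))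
  have hρind : ρ = X.indicator ρ := by
    funext x
    by_cases hx : x ∈ X
    · rw [indicator_of_mem hx]
    · rw [indicator_of_notMem hx, hρsupp x hx]
  have hIone : ∀ (s : Set (EuclideanSpace ℝ (Fin d))), MeasurableSet s →
      ∫ x in s, ρ x = ∫ x in X ∩ s, ρ x := by
    intro s hs
    calc ∫ x in s, ρ x = ∫ x in s, X.indicator ρ x := by rw [← hρind]
      _ = ∫ x in s ∩ X, ρ x := setIntegral_indicator hXm
      _ = ∫ x in X ∩ s, ρ x := by rw [inter_comm]
  set m : Y → ℝ := fun y => ∫ x in L y, ρ x with hm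
  suffices hgoal : (∀ φ : Y → ℝ, Φ φ ≤ Φ ψ) ↔ (∀ y : Y, m y = ν y) from hgoal
  have hmP : ∀ y, m y = ∫ x in X ∩ P y, ρ x := by
    intro y
    have h1 : m y = ∫ x in X ∩ L y, ρ x := hIone (L y) (hLm y)
    have h2 : (X ∩ L y : Set _) =ᵐ[volume] (X ∩ P y : Set _) := by
      rw [MeasureTheory.ae_eq_set]
      constructor
      · refine measure_mono_null ?_ (hLPnull y)
        rintro x ⟨⟨hxX, hxL⟩, hxnP⟩
        exact ⟨hxL, fun hP => hxnP ⟨hxX, hP⟩⟩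
      · have hsub : (X ∩ P y) \ (X ∩ L y) ⊆ (∅ : Set _) := by
          rintro x ⟨⟨hxX, hxP⟩, hn⟩
          exact absurd ⟨hxX, hPL y hxP⟩ hn
        exact measure_mono_null hsub measure_empty
    rw [h1]; exact setIntegral_congr_set h2
  have huniq : ∀ x ∈ X, ∃ y, x ∈ P y ∧ ∀ z, z ≠ y → x ∉ P z := by
    intro x hx
    obtain ⟨y, hy⟩ := hPcover x (hXΩ hx)
    exact ⟨y, hy, fun z hz hzx => hPdisj z y hz x hzx hy⟩
  have hsplit : ∀ g : Y → EuclideanSpace ℝ (Fin d) → ℝ,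
      (∀ y, IntegrableOn (g y) X) →
      ∑ y, ∫ x in X ∩ P y, g y x = ∫ x in X, ∑ y, (P y).indicator (g y) x := by
    intro g hg
    have h1 : ∀ y : Y, ∫ x in X, (P y).indicator (g y) x = ∫ x in X ∩ P y, g y x :=
      fun y => setIntegral_indicator (hPm y)
    calc ∑ y, ∫ x in X ∩ P y, g y x = ∑ y, ∫ x in X, (P y).indicator (g y) x :=
          Finset.sum_congr rfl fun y _ => (h1 y).symm
      _ = ∫ x in X, ∑ y, (P y).indicator (g y) x :=
          (integral_finset_sum _ fun y _ => (hg y).indicator (hPm y)).symm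
  set A : ℝ := ∑ y, ∫ x in X ∩ P y, c x y * ρ x with hA
  have hpiece : ∀ (φ : Y → ℝ) (y : Y),
      ∫ x in X ∩ P y, (c x y + φ y) * ρ x
        = (∫ x in X ∩ P y, c x y * ρ x) + φ y * (∫ x in X ∩ P y, ρ x) := by
    intro φ y
    have h1 : ∀ x, (c x y + φ y) * ρ x = c x y * ρ x + φ y * ρ x := fun x => by ring
    simp_rw [h1]
    rw [integral_add ((hIc y).mono_set inter_subset_left) ((hρs (P y)).const_mul (φ y)),
      integral_const_mul]
  have hsum2 : ∀ φ : Y → ℝ, ∑ y, ∫ x in X ∩ P y, (c x y + φ y) * ρ x = A + ∑ y, φ y * m y := by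
    intro φ
    calc ∑ y, ∫ x in X ∩ P y, (c x y + φ y) * ρ x
        = ∑ y, ((∫ x in X ∩ P y, c x y * ρ x) + φ y * m y) :=
          Finset.sum_congr rfl fun y _ => by rw [hpiece φ y, ← hmP y]
      _ = A + ∑ y, φ y * m y := by rw [Finset.sum_add_distrib]
  have hΦle : ∀ φ : Y → ℝ, Φ φ ≤ A + ∑ y, φ y * m y - ∑ y, φ y * ν y := by
    intro φ
    rw [hΦ φ]
    have key : ∫ x in X, (⨅ y, c x y + φ y) * ρ x
        ≤ ∑ y, ∫ x in X ∩ P y, (c x y + φ y) * ρ x := by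
      rw [hsplit (fun y x => (c x y + φ y) * ρ x) (fun y => hIyφ y φ)]
      refine setIntegral_mono_on (hIinf φ)
        (integrable_finset_sum _ fun y _ => (hIyφ y φ).indicator (hPm y)) hXm ?_
      intro x hx
      obtain ⟨y0, hy0, huy⟩ := huniq x hx
      have hsum : ∑ y, (P y).indicator (fun x' => (c x' y + φ y) * ρ x') x
          = (c x y0 + φ y0) * ρ x := by
        rw [Finset.sum_eq_single y0]
        · rw [indicator_of_mem hy0]
        · intro z _ hz; rw [indicator_of_notMem (huy z hz)]
        · intro h; exact absurd (Finset.mem_univ y0) h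
      rw [hsum]
      exact mul_le_mul_of_nonneg_right (ciInf_le (hbddR φ x) y0) (hρnn x)
    have h2 := hsum2 φ
    linarith
  have hΦψ : Φ ψ = A + ∑ y, ψ y * m y - ∑ y, ψ y * ν y := by
    rw [hΦ ψ]
    have key : ∫ x in X, (⨅ y, c x y + ψ y) * ρ x
        = ∑ y, ∫ x in X ∩ P y, (c x y + ψ y) * ρ x := by
      rw [hsplit (fun y x => (c x y + ψ y) * ρ x) (fun y => hIyφ y ψ)]
      refine setIntegral_congr_fun hXm fun x hx => ?_
      obtain ⟨y0, hy0, huy⟩ := huniq x hx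
      have hsum : ∑ y, (P y).indicator (fun x' => (c x' y + ψ y) * ρ x') x
          = (c x y0 + ψ y0) * ρ x := by
        rw [Finset.sum_eq_single y0]
        · rw [indicator_of_mem hy0]
        · intro z _ hz; rw [indicator_of_notMem (huy z hz)]
        · intro h; exact absurd (Finset.mem_univ y0) h
      rw [hsum]
      congr 1
      exact le_antisymm (ciInf_le (hbddR ψ x) y0) (le_ciInf fun z => (hPL y0 hy0).2 z)
    have h2 := hsum2 ψ
    linarith
  have hsum1 : ∑ y, m y = 1 := by
    have h1 : ∑ y, m y = ∫ x in X, ∑ y, (P y).indicator ρ x := by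
      rw [← hsplit (fun _ => ρ) (fun _ => hρX)]
      exact Finset.sum_congr rfl fun y _ => hmP y
    rw [h1, ← hρint]
    refine setIntegral_congr_fun hXm fun x hx => ?_
    obtain ⟨y0, hy0, huy⟩ := huniq x hx
    rw [Finset.sum_eq_single y0]
    · exact indicator_of_mem hy0 ρ
    · intro z _ hz; exact indicator_of_notMem (huy z hz) ρ
    · intro h; exact absurd (Finset.mem_univ y0) h
  constructor
  · intro hmax
    have hle : ∀ y, m y ≤ ν y := by
      intro y
      set S : ℝ → Set (EuclideanSpace ℝ (Fin d)) :=
        fun t => {x ∈ Ω | ∀ z : Y, z ≠ y → c x y + ψ y + t ≤ c x z + ψ z} with hSdef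
      have hSm : ∀ t, MeasurableSet (S t) := by
        intro t
        have h : S t = ⋂ z : Y, {x ∈ Ω | z ≠ y → c x y - c x z ≤ ψ z - ψ y - t} := by
          ext x
          simp only [hSdef, mem_setOf_eq, mem_iInter]
          constructor
          · rintro ⟨hxΩ, h⟩ z; exact ⟨hxΩ, fun hz => by have := h z hz; linarith⟩
          · intro h
            refine ⟨(h y).1, fun z hz => ?_⟩
            have := (h z).2 hz; linarith
        rw [h]
        refine MeasurableSet.iInter fun z => ?_
        by_cases hz : z = y
        · have he : {x ∈ Ω | z ≠ y → c x y - c x z ≤ ψ z - ψ y - t} = Ω := by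
            ext x; simp [hz]
          rw [he]; exact hΩm
        · have he : {x ∈ Ω | z ≠ y → c x y - c x z ≤ ψ z - ψ y - t}
              = {x ∈ Ω | c x y - c x z ≤ ψ z - ψ y - t} := by
            ext x; simp [hz]
          rw [he]; exact aux_measurableSet_le hΩ ((hReg y).sub (hReg z)) _
      have hclaimA : ∀ t, 0 < t → ∫ x in X ∩ S t, ρ x ≤ ν y := by
        intro t ht
        set φ : Y → ℝ := fun z => ψ z + if z = y then t else 0 with hφdef
        have hmax' := hmax φ
        rw [hΦ φ, hΦ ψ] at hmax'
        have hνφ : ∑ z, φ z * ν z = ∑ z, ψ z * ν z + t * ν y := by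
          simp only [hφdef, add_mul, ite_mul, zero_mul]
          rw [Finset.sum_add_distrib]
          congr 1
          simp [Finset.sum_ite_eq']
        have hpt : ∀ x ∈ X, (⨅ z, c x z + ψ z) * ρ x + t * (S t).indicator ρ x
            ≤ (⨅ z, c x z + φ z) * ρ x := by
          intro x hx
          by_cases hxS : x ∈ S t
          · rw [indicator_of_mem hxS]
            have h1 : (⨅ z, c x z + ψ z) = c x y + ψ y := by
              refine le_antisymm (ciInf_le (hbddR ψ x) y) (le_ciInf fun z => ?_)
              by_cases hz : z = y
              · subst hz; exact le_refl _
              · have := hxS.2 z hz; linarith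
            have h2 : c x y + ψ y + t ≤ ⨅ z, c x z + φ z := by
              refine le_ciInf fun z => ?_
              by_cases hz : z = y
              · subst hz
                have hφz : φ z = ψ z + t := by simp [hφdef]
                linarith
              · have hφz : φ z = ψ z := by simp [hφdef, hz]
                have := hxS.2 z hz; linarith
            calc (⨅ z, c x z + ψ z) * ρ x + t * ρ x = (c x y + ψ y + t) * ρ x := by
                  rw [h1]; ring
              _ ≤ (⨅ z, c x z + φ z) * ρ x := mul_le_mul_of_nonneg_right h2 (hρnn x)
          · rw [indicator_of_notMem hxS, mul_zero, add_zero]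
            refine mul_le_mul_of_nonneg_right (ciInf_mono (hbddR ψ x) fun z => ?_) (hρnn x)
            by_cases hz : z = y
            · have hφz : φ z = ψ z + t := by simp [hφdef, hz]
              linarith
            · have hφz : φ z = ψ z := by simp [hφdef, hz]
              linarith
        have hint : ∫ x in X, ((⨅ z, c x z + ψ z) * ρ x + t * (S t).indicator ρ x)
            ≤ ∫ x in X, (⨅ z, c x z + φ z) * ρ x := by
          refine setIntegral_mono_on ?_ (hIinf φ) hXm hpt
          exact (hIinf ψ).add ((hρX.indicator (hSm t)).const_mul t)
        rw [integral_add (hIinf ψ) ((hρX.indicator (hSm t)).const_mul t), integral_const_mul,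
          setIntegral_indicator (hSm t)] at hint
        rw [hνφ] at hmax'
        have h3 : t * ∫ x in X ∩ S t, ρ x ≤ t * ν y := by linarith
        exact le_of_mul_le_mul_left h3 ht
      set T : ℕ → Set (EuclideanSpace ℝ (Fin d)) := fun n => X ∩ S (1/(n+1)) with hT
      have hTmono : Monotone T := by
        intro n k hnk
        refine inter_subset_inter_right X ?_
        rintro x ⟨hxΩ, hx⟩
        refine ⟨hxΩ, fun z hz => ?_⟩
        have h1 : (1:ℝ)/(k+1) ≤ 1/(n+1) := by
          apply one_div_le_one_div_of_le (by positivity)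
          have : (n:ℝ) ≤ k := by exact_mod_cast hnk
          linarith
        have := hx z hz; linarith
      have hTm : ∀ n, MeasurableSet (T n) := fun n => hXm.inter (hSm _)
      have hTsub : (⋃ n, T n) ⊆ X := iUnion_subset fun n => inter_subset_left
      have hTint : IntegrableOn ρ (⋃ n, T n) := hρX.mono_set hTsub
      have htend := tendsto_setIntegral_of_monotone hTm hTmono hTint
      have hUle : ∫ x in ⋃ n, T n, ρ x ≤ ν y := by
        refine le_of_tendsto htend (Filter.Eventually.of_forall fun n => ?_)
        exact hclaimA (1/(n+1)) (by positivity)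
      have hcover : (X ∩ L y) \ (⋃ n, T n)
          ⊆ ⋃ (z : Y), ⋃ (_ : z ≠ y), {x ∈ Ω | c x y - c x z = ψ z - ψ y} := by
        rintro x ⟨⟨hxX, hxL⟩, hxU⟩
        by_contra hc
        simp only [mem_iUnion, not_exists] at hc
        have hstrict : ∀ z, z ≠ y → c x y + ψ y < c x z + ψ z := by
          intro z hz
          rcases lt_or_eq_of_le (hxL.2 z) with h | h
          · exact h
          · exact absurd ⟨hxL.1, by linarith⟩ (hc z hz)
        obtain ⟨δ, hδ0, hδ⟩ : ∃ δ > 0, ∀ z, z ≠ y → c x y + ψ y + δ ≤ c x z + ψ z := by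
          rcases Finset.eq_empty_or_nonempty (Finset.univ.erase y) with he | hne
          · refine ⟨1, one_pos, fun z hz => ?_⟩
            exact absurd (Finset.mem_erase.2 ⟨hz, Finset.mem_univ z⟩) (by simp [he])
          · obtain ⟨z0, hz0F, hz0min⟩ := Finset.exists_min_image _ (fun z => c x z + ψ z) hne
            have hz0y : z0 ≠ y := (Finset.mem_erase.1 hz0F).1
            refine ⟨(c x z0 + ψ z0) - (c x y + ψ y), by linarith [hstrict z0 hz0y],
              fun z hz => ?_⟩
            have := hz0min z (Finset.mem_erase.2 ⟨hz, Finset.mem_univ z⟩)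
            linarith
        obtain ⟨n, hn⟩ := exists_nat_gt (1/δ)
        have hx' : x ∈ T n := by
          refine ⟨hxX, hxL.1, fun z hz => ?_⟩
          have h1 : (1:ℝ)/(n+1) ≤ δ := by
            rw [div_le_iff₀ (by positivity)]
            rw [div_lt_iff₀ hδ0] at hn
            nlinarith
          have := hδ z hz; linarith
        exact hxU (mem_iUnion.2 ⟨n, hx'⟩)
      have hnullc : volume ((X ∩ L y) \ (⋃ n, T n)) = 0 :=
        measure_mono_null hcover (measure_iUnion_null fun z =>
          measure_iUnion_null fun hz => hTwist y z (Ne.symm hz) _)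
      have h5 : m y ≤ ∫ x in ⋃ n, T n, ρ x := by
        have h6 : m y = ∫ x in X ∩ L y, ρ x := hIone (L y) (hLm y)
        rw [h6]
        have hsub2 : X ∩ L y ⊆ (⋃ n, T n) ∪ ((X ∩ L y) \ ⋃ n, T n) := by
          intro x hx
          by_cases h : x ∈ ⋃ n, T n
          · exact Or.inl h
          · exact Or.inr ⟨hx, h⟩
        have hsub3 : ((⋃ n, T n) ∪ ((X ∩ L y) \ ⋃ n, T n)) ⊆ X := by
          refine union_subset hTsub ?_
          rintro x ⟨⟨hxX, -⟩, -⟩; exact hxX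
        have hint2 : IntegrableOn ρ ((⋃ n, T n) ∪ ((X ∩ L y) \ ⋃ n, T n)) :=
          hρX.mono_set hsub3
        calc ∫ x in X ∩ L y, ρ x
            ≤ ∫ x in (⋃ n, T n) ∪ ((X ∩ L y) \ ⋃ n, T n), ρ x :=
              setIntegral_mono_set hint2 (ae_of_all _ hρnn)
                (HasSubset.Subset.eventuallyLE hsub2)
          _ = ∫ x in ⋃ n, T n, ρ x := by
              refine setIntegral_congr_set ?_
              rw [MeasureTheory.ae_eq_set]
              constructor
              · refine measure_mono_null ?_ hnullc
                rintro x ⟨hx1, hx2⟩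
                rcases hx1 with h | h
                · exact absurd h hx2
                · exact h
              · have : (⋃ n, T n) \ ((⋃ n, T n) ∪ ((X ∩ L y) \ ⋃ n, T n)) ⊆ (∅ : Set _) := by
                  rintro x ⟨hx1, hx2⟩
                  exact absurd (Or.inl hx1) hx2
                exact measure_mono_null this measure_empty
      exact h5.trans hUle
    exact fun y => (Finset.sum_eq_sum_iff_of_le fun i _ => hle i).1
      (by rw [hsum1, hν1]) y (Finset.mem_univ y)
  · intro hmass φ
    have h1 := hΦle φ
    have h2 : ∑ y, φ y * m y = ∑ y, φ y * ν y :=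
      Finset.sum_congr rfl fun y _ => by rw [hmass y]
    have h3 : Φ ψ = A := by
      rw [hΦψ]
      have h4 : ∑ y, ψ y * m y = ∑ y, ψ y * ν y :=
        Finset.sum_congr rfl fun y _ => by rw [hmass y]
      rw [h4]; ring
    rw [h3]; rw [h2] at h1; linarith
end

section
/- Assume each cost function c_y is continuous on Ω (Reg') and that for all y ≠ z in Y and every t ∈ ℝ the level set {x ∈ Ω : c(x,y) − c(x,z) = t} has Lebesgue measure zero (Twist'). Let ρ be a probability density over a compact subset X of Ω. Then the map G : ℝ^Y → ℝ^Y defined by G(ψ)_y = ∫_{Lag_y(ψ)} ρ(x) dx is continuous. -/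
open MeasureTheory Set Filter Topology

/-- Proposition: under (Reg') and (Twist'), the map `ψ ↦ (ρ(Lag_y(ψ)))_{y ∈ Y}`
is continuous. -/
theorem laguerre_masses_continuous
    (d : ℕ) (Ω : Set (EuclideanSpace ℝ (Fin d))) (hΩ : IsOpen Ω)
    (Y : Type*) [Fintype Y] [Nonempty Y]
    (c : EuclideanSpace ℝ (Fin d) → Y → ℝ)
    -- (Reg') : each cost function is continuous on Ω
    (hReg : ∀ y : Y, ContinuousOn (fun x => c x y) Ω)
    -- (Twist') : level sets of differences of costs are Lebesgue-negligible
    (hTwist : ∀ y z : Y, y ≠ z → ∀ t : ℝ,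
      volume {x ∈ Ω | c x y - c x z = t} = 0)
    -- ρ is a probability density over a compact subset X of Ω
    (X : Set (EuclideanSpace ℝ (Fin d))) (hX : IsCompact X) (hXΩ : X ⊆ Ω)
    (ρ : EuclideanSpace ℝ (Fin d) → ℝ) (hρmeas : Measurable ρ)
    (hρnn : ∀ x, 0 ≤ ρ x) (hρsupp : ∀ x, x ∉ X → ρ x = 0)
    (hρint : ∫ x in X, ρ x = 1) :
    Continuous (fun ψ : Y → ℝ => fun y : Y =>
      ∫ x in {x ∈ Ω | ∀ z : Y, c x y + ψ y ≤ c x z + ψ z}, ρ x) := by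
  classical
  -- integrability of ρ
  have hXm : MeasurableSet X := hX.isClosed.measurableSet
  have hρintOn : IntegrableOn ρ X := by
    by_contra h
    rw [MeasureTheory.integral_undef h] at hρint
    norm_num at hρint
  have hρInt : Integrable ρ := by
    rw [← integrableOn_univ]
    have h2 : IntegrableOn ρ Xᶜ :=
      (integrableOn_zero).congr_fun (fun x hx => (hρsupp x hx).symm) hXm.compl
    simpa [Set.union_compl_self] using hρintOn.union h2
  -- measurability of Laguerre cells
  have hScell : ∀ (y : Y) (ψ : Y → ℝ),
      MeasurableSet {x ∈ Ω | ∀ z : Y, c x y + ψ y ≤ c x z + ψ z} := by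
    intro y ψ
    have heq : {x ∈ Ω | ∀ z : Y, c x y + ψ y ≤ c x z + ψ z}
        = ⋂ z : Y, {x ∈ Ω | c x y + ψ y ≤ c x z + ψ z} := by
      ext x
      simp only [mem_setOf_eq, mem_iInter]
      exact ⟨fun ⟨h1, h2⟩ z => ⟨h1, h2 z⟩, fun h =>
        ⟨(h Classical.ofNonempty).1, fun z => (h z).2⟩⟩
    rw [heq]
    refine MeasurableSet.iInter fun z => ?_
    have hcont : ContinuousOn (fun x => c x z - c x y) Ω := (hReg z).sub (hReg y)
    have hopen : IsOpen (Ω ∩ (fun x => c x z - c x y) ⁻¹' (Iio (ψ y - ψ z))) :=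
      hcont.isOpen_inter_preimage hΩ isOpen_Iio
    have heq2 : {x ∈ Ω | c x y + ψ y ≤ c x z + ψ z}
        = Ω \ (Ω ∩ (fun x => c x z - c x y) ⁻¹' (Iio (ψ y - ψ z))) := by
      ext x
      simp only [mem_setOf_eq, mem_diff, mem_inter_iff, mem_preimage, mem_Iio]
      constructor
      · rintro ⟨hxΩ, h⟩
        exact ⟨hxΩ, fun h2 => by linarith [h2.2]⟩
      · rintro ⟨hxΩ, h⟩
        refine ⟨hxΩ, ?_⟩
        by_contra hlt
        exact h ⟨hxΩ, by linarith [not_le.mp hlt]⟩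
    rw [heq2]
    exact hΩ.measurableSet.diff hopen.measurableSet
  apply continuous_pi
  intro y
  apply SeqContinuous.continuous
  intro ψs ψ₀ hconv
  have key : ∀ ψ : Y → ℝ, ∫ x in {x ∈ Ω | ∀ z : Y, c x y + ψ y ≤ c x z + ψ z}, ρ x
      = ∫ x, ({x ∈ Ω | ∀ z : Y, c x y + ψ y ≤ c x z + ψ z}).indicator ρ x := by
    intro ψ; rw [integral_indicator (hScell y ψ)]
  simp only [Function.comp_def, key]
  apply tendsto_integral_of_dominated_convergence ρ
  · intro n
    exact (hρmeas.indicator (hScell y (ψs n))).aestronglyMeasurable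
  · exact hρInt
  · intro n
    filter_upwards with x
    rw [Real.norm_eq_abs,
      abs_of_nonneg (Set.indicator_nonneg (fun x _ => hρnn x) x)]
    exact Set.indicator_le_self' (fun x _ => hρnn x) x
  · -- a.e. pointwise convergence
    set T : Y → Set (EuclideanSpace ℝ (Fin d)) := fun z =>
      if z = y then ∅ else {x ∈ Ω | c x y - c x z = ψ₀ z - ψ₀ y} with hT
    have hN : volume (⋃ z : Y, T z) = 0 := by
      refine measure_iUnion_null fun z => ?_
      by_cases hz : z = y
      · simp [hT, hz]
      · simpa [hT, hz] using hTwist y z (fun h => hz h.symm) (ψ₀ z - ψ₀ y)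
    filter_upwards [measure_eq_zero_iff_ae_notMem.mp hN] with x hx
    have hEv : ∀ᶠ n in atTop,
        ({x ∈ Ω | ∀ z : Y, c x y + ψs n y ≤ c x z + ψs n z}).indicator ρ x
          = ({x ∈ Ω | ∀ z : Y, c x y + ψ₀ y ≤ c x z + ψ₀ z}).indicator ρ x := by
      by_cases hx0 : x ∈ {x ∈ Ω | ∀ z : Y, c x y + ψ₀ y ≤ c x z + ψ₀ z}
      · obtain ⟨hxΩ, hineq⟩ := hx0
        have hstrict : ∀ z, z ≠ y → c x y + ψ₀ y < c x z + ψ₀ z := by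
          intro z hz
          rcases lt_or_eq_of_le (hineq z) with h | h
          · exact h
          · exfalso
            apply hx
            refine mem_iUnion.mpr ⟨z, ?_⟩
            simp only [hT, if_neg hz, mem_setOf_eq]
            exact ⟨hxΩ, by linarith⟩
        have hev : ∀ᶠ n in atTop, ∀ z : Y, c x y + ψs n y ≤ c x z + ψs n z := by
          rw [eventually_all]
          intro z
          by_cases hz : z = y
          · subst hz; simp
          · have h1 : Tendsto (fun n => c x y + ψs n y) atTop (𝓝 (c x y + ψ₀ y)) :=
              tendsto_const_nhds.add (tendsto_pi_nhds.mp hconv y)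
            have h2 : Tendsto (fun n => c x z + ψs n z) atTop (𝓝 (c x z + ψ₀ z)) :=
              tendsto_const_nhds.add (tendsto_pi_nhds.mp hconv z)
            exact (h1.eventually_lt h2 (hstrict z hz)).mono fun n hn => hn.le
        filter_upwards [hev] with n hn
        have hm1 : x ∈ {x ∈ Ω | ∀ z : Y, c x y + ψs n y ≤ c x z + ψs n z} := ⟨hxΩ, hn⟩
        have hm2 : x ∈ {x ∈ Ω | ∀ z : Y, c x y + ψ₀ y ≤ c x z + ψ₀ z} := ⟨hxΩ, hineq⟩
        rw [Set.indicator_of_mem hm1, Set.indicator_of_mem hm2]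
      · by_cases hxΩ : x ∈ Ω
        · have : ∃ z : Y, c x z + ψ₀ z < c x y + ψ₀ y := by
            by_contra hc
            push_neg at hc
            exact hx0 ⟨hxΩ, fun z => hc z⟩
          obtain ⟨z, hz⟩ := this
          have h1 : Tendsto (fun n => c x z + ψs n z) atTop (𝓝 (c x z + ψ₀ z)) :=
            tendsto_const_nhds.add (tendsto_pi_nhds.mp hconv z)
          have h2 : Tendsto (fun n => c x y + ψs n y) atTop (𝓝 (c x y + ψ₀ y)) :=
            tendsto_const_nhds.add (tendsto_pi_nhds.mp hconv y)
          filter_upwards [h1.eventually_lt h2 hz] with n hn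
          rw [Set.indicator_of_notMem (fun hmem => absurd (hmem.2 z) (not_le.mpr hn)),
            Set.indicator_of_notMem hx0]
        · filter_upwards with n
          rw [Set.indicator_of_notMem (fun hmem => hxΩ hmem.1),
            Set.indicator_of_notMem hx0]
    exact Tendsto.congr' (hEv.mono fun n hn => hn.symm) tendsto_const_nhds
end

section
/- Let K ⊂ ℝ^d be a compact convex set, and let F be a C¹ diffeomorphism from an open neighborhood of K onto an open subset of ℝ^d such that F(K) is also convex. Then for every x ∈ ∂K, the normal cone of F(K) at F(x) equals the image of the normal cone of K at x under the adjoint of the derivative of F^{-1} at F(x): N_{F(x)}(F(K)) = (D F^{-1}|_{F(x)})^* (N_x K). -/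
open Set

private lemma deriv_nonpos_of_nonpos' {f : ℝ → ℝ} {c : ℝ} (hf : HasDerivAt f c 0)
    (h0 : f 0 = 0) (h : ∀ t ∈ Set.Ioc (0:ℝ) 1, f t ≤ 0) : c ≤ 0 := by
  have h' : HasDerivWithinAt f c (Set.Ioi 0) 0 := hf.hasDerivWithinAt
  rw [hasDerivWithinAt_iff_tendsto_slope] at h'
  rw [Set.diff_singleton_eq_self (by simp : (0:ℝ) ∉ Set.Ioi 0)] at h'
  refine le_of_tendsto h' ?_
  filter_upwards [Ioc_mem_nhdsGT_of_mem (by norm_num : (0:ℝ) ∈ Set.Ico (0:ℝ) 1)] with t ht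
  rw [slope_def_field]
  have ht0 : 0 < t := ht.1
  rw [h0, sub_zero, sub_zero]
  exact div_nonpos_of_nonpos_of_nonneg (h t ht) ht0.le

private lemma tangent_key {E : Type*} [NormedAddCommGroup E] [InnerProductSpace ℝ E]
    [CompleteSpace E]
    {C : Set E} (hC : Convex ℝ C) {Φ : E → E} {z : E} (hz : z ∈ C)
    {B : E →L[ℝ] E} (hΦ : HasFDerivAt Φ B z) {v : E}
    (hv : ∀ q ∈ Φ '' C, (inner ℝ (q - Φ z) v : ℝ) ≤ 0) :
    ∀ p ∈ C, (inner ℝ (p - z) (ContinuousLinearMap.adjoint B v) : ℝ) ≤ 0 := by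
  intro p hp
  rw [ContinuousLinearMap.adjoint_inner_right]
  -- curve t ↦ Φ (z + t • (p - z))
  have hc : HasDerivAt (fun t : ℝ => z + t • (p - z)) (p - z) 0 := by
    simpa using ((hasDerivAt_id (0:ℝ)).smul_const (p - z)).const_add z
  have hΦ' : HasFDerivAt Φ B (z + (0:ℝ) • (p - z)) := by simpa using hΦ
  have hγ : HasDerivAt (fun t : ℝ => Φ (z + t • (p - z))) (B (p - z)) 0 :=
    hΦ'.comp_hasDerivAt 0 hc
  have hf : HasDerivAt (fun t : ℝ => (inner ℝ (Φ (z + t • (p - z)) - Φ z) v : ℝ))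
      (inner ℝ (B (p - z)) v : ℝ) 0 := by
    have := ((innerSL ℝ v).hasFDerivAt.comp_hasDerivAt 0 (hγ.sub_const (Φ z)))
    simpa [Function.comp_def, innerSL_apply_apply, real_inner_comm v, map_sub, inner_sub_right] using this
  refine deriv_nonpos_of_nonpos' hf (by simp) ?_
  intro t ht
  have hmem : z + t • (p - z) ∈ C := by
    have := hC hz hp (by linarith [ht.2] : (0:ℝ) ≤ 1 - t) ht.1.le (by ring)
    convert this using 1
    simp [smul_sub, sub_smul]
    abel
  exact hv _ ⟨_, hmem, rfl⟩

/-- Lemma: the normal cone of the (convex) image of a convex set under a C¹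
diffeomorphism F is the image of the normal cone under the adjoint of D(F⁻¹). -/
theorem normal_cone_image_of_diffeomorphism
    (d : ℕ)
    (K U : Set (EuclideanSpace ℝ (Fin d)))
    (hK : IsCompact K) (hKconv : Convex ℝ K)
    (hU : IsOpen U) (hKU : K ⊆ U)
    (F G : EuclideanSpace ℝ (Fin d) → EuclideanSpace ℝ (Fin d))
    (hF : ContDiffOn ℝ 1 F U) (hFinj : InjOn F U)
    (hFUopen : IsOpen (F '' U))
    (hG : ContDiffOn ℝ 1 G (F '' U))
    (hGF : ∀ x ∈ U, G (F x) = x)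
    (hFG : ∀ y ∈ F '' U, F (G y) = y)
    (hFK : Convex ℝ (F '' K))
    (x : EuclideanSpace ℝ (Fin d)) (hx : x ∈ frontier K) :
    {v : EuclideanSpace ℝ (Fin d) | ∀ q ∈ F '' K, (inner ℝ (q - F x) v : ℝ) ≤ 0} =
      (ContinuousLinearMap.adjoint (fderiv ℝ G (F x))) ''
        {v : EuclideanSpace ℝ (Fin d) | ∀ q ∈ K, (inner ℝ (q - x) v : ℝ) ≤ 0} := by
  have hxK : x ∈ K := by
    have := frontier_subset_closure hx
    rwa [hK.isClosed.closure_eq] at this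
  have hxU : x ∈ U := hKU hxK
  have hFxFU : F x ∈ F '' U := ⟨x, hxU, rfl⟩
  set B := fderiv ℝ F x with hBdef
  set A := fderiv ℝ G (F x) with hAdef
  have hB : HasFDerivAt F B x :=
    ((hF.contDiffAt (hU.mem_nhds hxU)).differentiableAt one_ne_zero).hasFDerivAt
  have hA : HasFDerivAt G A (F x) :=
    ((hG.contDiffAt (hFUopen.mem_nhds hFxFU)).differentiableAt one_ne_zero).hasFDerivAt
  -- chain rule identities
  have hAB : A.comp B = ContinuousLinearMap.id ℝ _ := by
    have h1 : HasFDerivAt (G ∘ F) (A.comp B) x := hA.comp x hB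
    have h2 : (G ∘ F) =ᶠ[nhds x] id := by
      filter_upwards [hU.mem_nhds hxU] with y hy
      exact hGF y hy
    exact (h1.congr_of_eventuallyEq h2.symm).unique (hasFDerivAt_id x)
  have hBA : B.comp A = ContinuousLinearMap.id ℝ _ := by
    have hBx : HasFDerivAt F B (G (F x)) := by rwa [hGF x hxU]
    have h1 : HasFDerivAt (F ∘ G) (B.comp A) (F x) := hBx.comp (F x) hA
    have h2 : (F ∘ G) =ᶠ[nhds (F x)] id := by
      filter_upwards [hFUopen.mem_nhds hFxFU] with y hy
      exact hFG y hy
    exact (h1.congr_of_eventuallyEq h2.symm).unique (hasFDerivAt_id (F x))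
  have hadj : ∀ v, ContinuousLinearMap.adjoint A (ContinuousLinearMap.adjoint B v) = v := by
    intro v
    have : (ContinuousLinearMap.adjoint A).comp (ContinuousLinearMap.adjoint B)
        = ContinuousLinearMap.id ℝ _ := by
      rw [← ContinuousLinearMap.adjoint_comp, hBA]
      exact ContinuousLinearMap.adjoint_id
    calc ContinuousLinearMap.adjoint A (ContinuousLinearMap.adjoint B v)
        = ((ContinuousLinearMap.adjoint A).comp (ContinuousLinearMap.adjoint B)) v := rfl
      _ = v := by rw [this]; rfl
  ext v
  simp only [Set.mem_setOf_eq, Set.mem_image]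
  constructor
  · intro hv
    exact ⟨ContinuousLinearMap.adjoint B v, tangent_key hKconv hxK hB hv, hadj v⟩
  · rintro ⟨w, hw, rfl⟩
    have hv' : ∀ q ∈ G '' (F '' K), (inner ℝ (q - G (F x)) w : ℝ) ≤ 0 := by
      rintro q ⟨y, ⟨p, hpK, rfl⟩, rfl⟩
      rw [hGF x hxU, hGF p (hKU hpK)]
      exact hw p hpK
    exact tangent_key hFK ⟨x, hxK, rfl⟩ hA hv'
end

section
/- Let A : ℝ^d → ℝ^d be an invertible linear map and let cond(A) := ‖A‖·‖A^{-1}‖ be its condition number (operator norms). Then for all nonzero vectors v, w ∈ ℝ^d, cond(A)^{-2} (1 + ⟨v,w⟩/(‖v‖‖w‖)) ≤ 1 + ⟨Av, Aw⟩/(‖Av‖‖Aw‖) ≤ cond(A)^{2} (1 + ⟨v,w⟩/(‖v‖‖w‖)). -/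
open scoped RealInnerProductSpace

section helpers
variable {E : Type*} [NormedAddCommGroup E] [InnerProductSpace ℝ E]

lemma min_smul_add_le (a b : E) (ha : ‖a‖ = 1) (hb : ‖b‖ = 1)
    (s t : ℝ) (hs : 0 ≤ s) (ht : 0 ≤ t) :
    min s t * ‖a + b‖ ≤ ‖s • a + t • b‖ := by
  have hc := abs_real_inner_le_norm a b
  rw [ha, hb, mul_one] at hc
  obtain ⟨hc1, hc2⟩ := abs_le.mp hc
  set c := ⟪a, b⟫ with hcd
  have h1 : ‖a + b‖ ^ 2 = 2 + 2 * ⟪a, b⟫ := by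
    rw [norm_add_sq_real, ha, hb]; ring
  have h2 : ‖s • a + t • b‖ ^ 2 = s ^ 2 + 2 * s * t * ⟪a, b⟫ + t ^ 2 := by
    rw [norm_add_sq_real, norm_smul, norm_smul, real_inner_smul_left,
      real_inner_smul_right, ha, hb, Real.norm_eq_abs, Real.norm_eq_abs,
      abs_of_nonneg hs, abs_of_nonneg ht]
    ring
  have hmin : 0 ≤ min s t := le_min hs ht
  have hsq : (min s t * ‖a + b‖) ^ 2 ≤ ‖s • a + t • b‖ ^ 2 := by
    rw [mul_pow, h1, h2]
    rcases le_total s t with h | h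
    · rw [min_eq_left h]
      nlinarith [mul_nonneg (mul_nonneg hs (sub_nonneg.mpr h)) (show (0:ℝ) ≤ c + 1 by linarith),
        sq_nonneg (t - s)]
    · rw [min_eq_right h]
      nlinarith [mul_nonneg (mul_nonneg ht (sub_nonneg.mpr h)) (show (0:ℝ) ≤ c + 1 by linarith),
        sq_nonneg (s - t)]
  nlinarith [norm_nonneg (s • a + t • b), mul_nonneg hmin (norm_nonneg (a + b))]

lemma one_add_cos (v w : E) (hv : v ≠ 0) (hw : w ≠ 0) :
    1 + ⟪v, w⟫ / (‖v‖ * ‖w‖) = ‖(‖v‖⁻¹) • v + (‖w‖⁻¹) • w‖ ^ 2 / 2 := by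
  have hv' : ‖v‖ ≠ 0 := norm_ne_zero_iff.mpr hv
  have hw' : ‖w‖ ≠ 0 := norm_ne_zero_iff.mpr hw
  rw [norm_add_sq_real, norm_smul, norm_smul, real_inner_smul_left, real_inner_smul_right,
    Real.norm_eq_abs, Real.norm_eq_abs, abs_of_nonneg (inv_nonneg.mpr (norm_nonneg v)),
    abs_of_nonneg (inv_nonneg.mpr (norm_nonneg w))]
  field_simp
  ring

lemma oneSide (A : E ≃L[ℝ] E) (v w : E) (hv : v ≠ 0) (hw : w ≠ 0) :
    (1 / (‖(A : E →L[ℝ] E)‖ * ‖(A.symm : E →L[ℝ] E)‖) ^ 2) * (1 + ⟪v, w⟫ / (‖v‖ * ‖w‖)) ≤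
      1 + ⟪A v, A w⟫ / (‖A v‖ * ‖A w‖) := by
  have hAv : A v ≠ 0 := fun h => hv (by simpa using congrArg A.symm h)
  have hAw : A w ≠ 0 := fun h => hw (by simpa using congrArg A.symm h)
  set N := ‖(A : E →L[ℝ] E)‖ with hNdef
  set M := ‖(A.symm : E →L[ℝ] E)‖ with hMdef
  have hN : 0 < N := norm_pos_iff.mpr (fun h => hAv (by
    have : (A : E →L[ℝ] E) v = A v := rfl
    rw [h] at this; simpa using this.symm))
  have hM : 0 < M := norm_pos_iff.mpr (fun h => hv (by
    have : (A.symm : E →L[ℝ] E) (A v) = v := by simp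
    rw [h] at this; simpa using this.symm))
  have hv' : (0:ℝ) < ‖v‖ := norm_pos_iff.mpr hv
  have hw' : (0:ℝ) < ‖w‖ := norm_pos_iff.mpr hw
  have hAv' : (0:ℝ) < ‖A v‖ := norm_pos_iff.mpr hAv
  have hAw' : (0:ℝ) < ‖A w‖ := norm_pos_iff.mpr hAw
  set a := (‖v‖⁻¹) • v with hadef
  set b := (‖w‖⁻¹) • w with hbdef
  have hna : ‖a‖ = 1 := by rw [hadef, norm_smul, norm_inv, norm_norm, inv_mul_cancel₀ hv'.ne']
  have hnb : ‖b‖ = 1 := by rw [hbdef, norm_smul, norm_inv, norm_norm, inv_mul_cancel₀ hw'.ne']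
  set s := ‖v‖ / ‖A v‖ with hsdef
  set t := ‖w‖ / ‖A w‖ with htdef
  have hs : 0 ≤ s := div_nonneg hv'.le hAv'.le
  have ht : 0 ≤ t := div_nonneg hw'.le hAw'.le
  have e1 : s • a = (‖A v‖⁻¹ : ℝ) • v := by
    rw [hadef, smul_smul, hsdef]; congr 1; field_simp
  have e2 : t • b = (‖A w‖⁻¹ : ℝ) • w := by
    rw [hbdef, smul_smul, htdef]; congr 1; field_simp
  have hid : (‖A v‖⁻¹) • A v + (‖A w‖⁻¹) • A w = A (s • a + t • b) := by
    rw [e1, e2, map_add, map_smul, map_smul]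
  -- norm bounds
  have hb1 : ‖s • a + t • b‖ ≤ M * ‖A (s • a + t • b)‖ := by
    have := (A.symm : E →L[ℝ] E).le_opNorm (A (s • a + t • b))
    simpa using this
  have hb2 : min s t * ‖a + b‖ ≤ ‖s • a + t • b‖ := min_smul_add_le a b hna hnb s t hs ht
  have hb3 : N⁻¹ ≤ min s t := by
    have h1 : ‖A v‖ ≤ N * ‖v‖ := by
      have := (A : E →L[ℝ] E).le_opNorm v; simpa using this
    have h2 : ‖A w‖ ≤ N * ‖w‖ := by
      have := (A : E →L[ℝ] E).le_opNorm w; simpa using this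
    refine le_min ?_ ?_
    · rw [hsdef, le_div_iff₀ hAv', inv_mul_le_iff₀ hN]; linarith
    · rw [htdef, le_div_iff₀ hAw', inv_mul_le_iff₀ hN]; linarith
  have hkey : (N * M)⁻¹ * ‖a + b‖ ≤ ‖(‖A v‖⁻¹) • A v + (‖A w‖⁻¹) • A w‖ := by
    rw [hid]
    have c1 : M⁻¹ * ‖s • a + t • b‖ ≤ ‖A (s • a + t • b)‖ := by
      rw [inv_mul_le_iff₀ hM]; exact hb1
    have c2 : (N * M)⁻¹ * ‖a + b‖ ≤ M⁻¹ * ‖s • a + t • b‖ := by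
      have : (N * M)⁻¹ * ‖a + b‖ = M⁻¹ * (N⁻¹ * ‖a + b‖) := by
        rw [mul_inv]; ring
      rw [this]
      have : N⁻¹ * ‖a + b‖ ≤ min s t * ‖a + b‖ :=
        mul_le_mul_of_nonneg_right hb3 (norm_nonneg _)
      have := this.trans hb2
      exact mul_le_mul_of_nonneg_left this (inv_nonneg.mpr hM.le)
    exact c2.trans c1
  rw [one_add_cos v w hv hw, one_add_cos (A v) (A w) hAv hAw]
  have hU : (0:ℝ) ≤ ‖(‖A v‖⁻¹) • A v + (‖A w‖⁻¹) • A w‖ := norm_nonneg _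
  have hab : (0:ℝ) ≤ ‖a + b‖ := norm_nonneg _
  have hNM : 0 < N * M := mul_pos hN hM
  have hsq : ((N * M)⁻¹ * ‖a + b‖) ^ 2 ≤ ‖(‖A v‖⁻¹) • A v + (‖A w‖⁻¹) • A w‖ ^ 2 := by
    apply pow_le_pow_left₀ (mul_nonneg (inv_nonneg.mpr hNM.le) hab) hkey
  rw [mul_pow, inv_pow] at hsq
  have : 1 / (N * M) ^ 2 * (‖a + b‖ ^ 2 / 2) ≤ ‖(‖A v‖⁻¹) • A v + (‖A w‖⁻¹) • A w‖ ^ 2 / 2 := by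
    rw [one_div]; linarith
  convert this using 2

end helpers

/-- Lemma (generalized Wielandt angle estimate): an invertible linear map A distorts
the quantity 1 + cos of the angle between nonzero vectors by at most cond(A)². -/
theorem wielandt_angle_distortion
    (d : ℕ)
    (A : EuclideanSpace ℝ (Fin d) ≃L[ℝ] EuclideanSpace ℝ (Fin d))
    (v w : EuclideanSpace ℝ (Fin d)) (hv : v ≠ 0) (hw : w ≠ 0) :
    (1 / (‖(A : EuclideanSpace ℝ (Fin d) →L[ℝ] EuclideanSpace ℝ (Fin d))‖ *
          ‖(A.symm : EuclideanSpace ℝ (Fin d) →L[ℝ] EuclideanSpace ℝ (Fin d))‖) ^ 2) *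
        (1 + (inner ℝ v w : ℝ) / (‖v‖ * ‖w‖)) ≤
      1 + (inner ℝ (A v) (A w) : ℝ) / (‖A v‖ * ‖A w‖) ∧
    1 + (inner ℝ (A v) (A w) : ℝ) / (‖A v‖ * ‖A w‖) ≤
      (‖(A : EuclideanSpace ℝ (Fin d) →L[ℝ] EuclideanSpace ℝ (Fin d))‖ *
       ‖(A.symm : EuclideanSpace ℝ (Fin d) →L[ℝ] EuclideanSpace ℝ (Fin d))‖) ^ 2 *
        (1 + (inner ℝ v w : ℝ) / (‖v‖ * ‖w‖)) := by
  have hAv : A v ≠ 0 := fun h => hv (by simpa using congrArg A.symm h)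
  set N := ‖(A : EuclideanSpace ℝ (Fin d) →L[ℝ] EuclideanSpace ℝ (Fin d))‖ with hNdef
  set M := ‖(A.symm : EuclideanSpace ℝ (Fin d) →L[ℝ] EuclideanSpace ℝ (Fin d))‖ with hMdef
  have hN : 0 < N := norm_pos_iff.mpr (fun h => hAv (by
    have : (A : EuclideanSpace ℝ (Fin d) →L[ℝ] EuclideanSpace ℝ (Fin d)) v = A v := rfl
    rw [h] at this; simpa using this.symm))
  have hM : 0 < M := norm_pos_iff.mpr (fun h => hv (by
    have : (A.symm : EuclideanSpace ℝ (Fin d) →L[ℝ] EuclideanSpace ℝ (Fin d)) (A v) = v := by simp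
    rw [h] at this; simpa using this.symm))
  constructor
  · exact oneSide A v w hv hw
  · have hAw : A w ≠ 0 := fun h => hw (by simpa using congrArg A.symm h)
    have h2 := oneSide A.symm (A v) (A w) hAv hAw
    simp only [ContinuousLinearEquiv.symm_symm, ContinuousLinearEquiv.symm_apply_apply] at h2
    have hNM : (0:ℝ) < (N * M) ^ 2 := by positivity
    rw [mul_comm M N] at h2
    rw [one_div, inv_mul_le_iff₀ hNM] at h2
    exact h2
end

section
/- Let K be a convex compact subset of ℝ^d and τ > 0. Define the set of τ-singular points Sing(K, τ) := {x ∈ ∂K : ∃ u, v ∈ N_x K with ‖u‖ = ‖v‖ = 1 and ⟨u,v⟩² ≤ 1 − τ²}. Then there exists a constant depending only on d and diam(K) such that ℋ^{d−2}(Sing(K, τ)) ≤ const(d, diam(K)) / τ. -/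
set_option maxHeartbeats 2000000

open MeasureTheory Set Metric
open scoped RealInnerProductSpace ENNReal

lemma exists_arc {d : ℕ} {K : Set (EuclideanSpace ℝ (Fin d))} {t u v : EuclideanSpace ℝ (Fin d)}
    {τ : ℝ} (hτ : 0 < τ) (hu : ‖u‖ = 1) (hv : ‖v‖ = 1)
    (hnu : ∀ q ∈ K, ⟪q - t, u⟫ ≤ 0) (hnv : ∀ q ∈ K, ⟪q - t, v⟫ ≤ 0)
    (hsing : ⟪u, v⟫ ^ 2 ≤ 1 - τ ^ 2) :
    ∃ w : ℝ → EuclideanSpace ℝ (Fin d),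
      (∀ θ, ‖w θ‖ = 1) ∧
      (∀ θ, 0 ≤ θ → θ ≤ τ → ∀ q ∈ K, ⟪q - t, w θ⟫ ≤ 0) ∧
      (∀ θ θ', ‖w θ - w θ'‖ ^ 2 = 2 - 2 * Real.cos (θ - θ')) := by
  set c : ℝ := ⟪u, v⟫ with hc
  have huv : ⟪u, v⟫ = c := rfl
  have hvu : ⟪v, u⟫ = c := by rw [real_inner_comm]
  have huu : ⟪u, u⟫ = 1 := by rw [real_inner_self_eq_norm_sq, hu]; norm_num
  have hvv : ⟪v, v⟫ = 1 := by rw [real_inner_self_eq_norm_sq, hv]; norm_num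
  have hτ1 : τ ≤ 1 := by nlinarith [sq_nonneg c, sq_nonneg (τ - 1)]
  have hc2 : c ^ 2 < 1 := by nlinarith
  have hσpos : 0 < Real.sqrt (1 - c ^ 2) := Real.sqrt_pos.2 (by nlinarith)
  set σ : ℝ := Real.sqrt (1 - c ^ 2) with hσ
  have hσ2 : σ ^ 2 = 1 - c ^ 2 := Real.sq_sqrt (by nlinarith)
  set e : EuclideanSpace ℝ (Fin d) := σ⁻¹ • (v - c • u) with he
  have hue : ⟪u, e⟫ = 0 := by
    simp only [he, real_inner_smul_right, inner_sub_right, real_inner_smul_right, huu, huv]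
    ring
  have heu : ⟪e, u⟫ = 0 := by rw [real_inner_comm]; exact hue
  have hee : ⟪e, e⟫ = 1 := by
    simp only [he, real_inner_smul_right, real_inner_smul_left, inner_sub_left,
      inner_sub_right, huu, hvv, huv, hvu]
    field_simp
    nlinarith [hσ2]
  refine ⟨fun θ => Real.cos θ • u + Real.sin θ • e, ?_, ?_, ?_⟩
  · intro θ
    have h1 : ‖Real.cos θ • u + Real.sin θ • e‖ ^ 2 = 1 := by
      rw [← real_inner_self_eq_norm_sq]
      simp only [inner_add_left, inner_add_right, real_inner_smul_left, real_inner_smul_right,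
        huu, hee, hue, heu]
      nlinarith [Real.sin_sq_add_cos_sq θ]
    nlinarith [norm_nonneg (Real.cos θ • u + Real.sin θ • e)]
  · intro θ hθ0 hθτ q hq
    set θ₀ : ℝ := Real.arccos c with hθ₀
    have hc1 : -1 ≤ c := by nlinarith
    have hc1' : c ≤ 1 := by nlinarith
    have hcos : Real.cos θ₀ = c := Real.cos_arccos hc1 hc1'
    have hsin : Real.sin θ₀ = σ := Real.sin_arccos c
    have hθ₀pi : θ₀ ≤ Real.pi := Real.arccos_le_pi c
    have hτσ : τ ≤ σ := by
      have h1 : τ = Real.sqrt (τ ^ 2) := (Real.sqrt_sq hτ.le).symm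
      rw [h1, hσ]
      exact Real.sqrt_le_sqrt (by nlinarith)
    have hτθ₀ : τ ≤ θ₀ := by
      have := Real.sin_le (Real.arccos_nonneg c)
      rw [hsin] at this; linarith
    set b : ℝ := Real.sin θ / σ with hbdef
    set a : ℝ := Real.cos θ - c * Real.sin θ / σ with hadef
    have hθpi : θ ≤ Real.pi := by linarith
    have hsinθ : 0 ≤ Real.sin θ := Real.sin_nonneg_of_nonneg_of_le_pi hθ0 hθpi
    have hb : 0 ≤ b := div_nonneg hsinθ hσpos.le
    have ha : 0 ≤ a := by
      have hid : Real.sin (θ₀ - θ) = σ * Real.cos θ - c * Real.sin θ := by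
        rw [Real.sin_sub, hsin, hcos]
      have hs : 0 ≤ Real.sin (θ₀ - θ) :=
        Real.sin_nonneg_of_nonneg_of_le_pi (by linarith) (by linarith)
      have h2 : 0 ≤ σ * Real.cos θ - c * Real.sin θ := by rw [← hid]; exact hs
      rw [hadef, sub_nonneg, div_le_iff₀ hσpos]
      nlinarith
    have hwe : Real.cos θ • u + Real.sin θ • e = a • u + b • v := by
      rw [he, hadef, hbdef]
      match_scalars <;> field_simp <;> ring
    show ⟪q - t, Real.cos θ • u + Real.sin θ • e⟫ ≤ 0
    rw [hwe, inner_add_right, real_inner_smul_right, real_inner_smul_right]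
    have h1 := hnu q hq
    have h2 := hnv q hq
    nlinarith
  · intro θ θ'
    have hsub : (Real.cos θ • u + Real.sin θ • e) - (Real.cos θ' • u + Real.sin θ' • e)
        = (Real.cos θ - Real.cos θ') • u + (Real.sin θ - Real.sin θ') • e := by
      module
    rw [hsub, ← real_inner_self_eq_norm_sq]
    simp only [inner_add_left, inner_add_right, real_inner_smul_left, real_inner_smul_right,
      huu, hee, hue, heu, Real.cos_sub]
    nlinarith [Real.sin_sq_add_cos_sq θ, Real.sin_sq_add_cos_sq θ']

private lemma sq_le_imp {a b : ℝ} (ha : 0 ≤ a) (hb : 0 ≤ b) (h : a^2 ≤ b^2) : a ≤ b := by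
  nlinarith

private lemma chord_lower {x δ : ℝ} (hδ : 0 < δ) (hlow : 4*δ ≤ x) (hup : x ≤ 1) :
    (15/4*δ)^2 ≤ 2 - 2*Real.cos x := by
  have hx0 : 0 < x/2 := by linarith
  have hx1 : x/2 ≤ 1 := by linarith
  have hsin := Real.sin_gt_sub_cube hx0
  have hxx : (x/2)*((x/2)^2) ≤ (x/2)*(1/4) :=
    mul_le_mul_of_nonneg_left (by nlinarith) hx0.le
  have hsinlow : 15/8*δ ≤ Real.sin (x/2) := by nlinarith
  have hcos2 : Real.cos x = 1 - 2*Real.sin (x/2)^2 := by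
    have h1' : Real.cos (2*(x/2)) = 2*Real.cos (x/2)^2 - 1 := Real.cos_two_mul _
    have h2' := Real.sin_sq_add_cos_sq (x/2)
    have h3 : 2*(x/2) = x := by ring
    rw [h3] at h1'
    linarith
  rw [hcos2]
  nlinarith

private lemma norm_add_ge {E : Type*} [NormedAddCommGroup E] [InnerProductSpace ℝ E]
    (t t' wi wi' : E) (s s' : ℝ) (hs : 0 ≤ s) (hs' : 0 ≤ s')
    (h1 : 0 ≤ ⟪t - t', wi⟫) (h2 : ⟪t - t', wi'⟫ ≤ 0) :
    ‖t - t'‖ ≤ ‖(t - t') + (s • wi - s' • wi')‖ := by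
  have hkey : ‖t - t'‖^2 ≤ ‖(t - t') + (s • wi - s' • wi')‖^2 := by
    rw [norm_add_sq_real]
    have hinner : ⟪t - t', s • wi - s' • wi'⟫ = s * ⟪t - t', wi⟫ - s' * ⟪t - t', wi'⟫ := by
      rw [inner_sub_right, real_inner_smul_right, real_inner_smul_right]
    nlinarith [sq_nonneg ‖s • wi - s' • wi'‖, mul_nonneg hs h1,
      mul_nonpos_of_nonneg_of_nonpos hs' h2]
  exact sq_le_imp (norm_nonneg _) (norm_nonneg _) hkey

lemma packing {d m : ℕ} (hdm : d = m + 2) {K : Set (EuclideanSpace ℝ (Fin d))}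
    (hbd : Bornology.IsBounded K) {R τ δ : ℝ} (hR : 0 ≤ R) (hdiam : diam K ≤ R)
    (hτ : 0 < τ) (hδ : 0 < δ) (hδτ : δ ≤ τ / 8) (hδ1 : δ ≤ 1 / 50)
    (T : Finset (EuclideanSpace ℝ (Fin d)))
    (hT : ∀ t ∈ T, t ∈ K ∧ ∃ u v : EuclideanSpace ℝ (Fin d), ‖u‖ = 1 ∧ ‖v‖ = 1 ∧
        (∀ q ∈ K, ⟪q - t, u⟫ ≤ 0) ∧ (∀ q ∈ K, ⟪q - t, v⟫ ≤ 0) ∧ ⟪u, v⟫ ^ 2 ≤ 1 - τ ^ 2)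
    (hsep : ∀ t ∈ T, ∀ t' ∈ T, t ≠ t' → 2 * δ < dist t t') :
    (T.card : ℝ) * (τ * δ ^ m) ≤ 160 * 4 ^ d * (R + 3) ^ d := by
  have hRHS : (0:ℝ) ≤ 160 * 4 ^ d * (R + 3) ^ d := by positivity
  rcases T.eq_empty_or_nonempty with hTe | ⟨x₀, hx₀⟩
  · simp [hTe, hRHS]
  have hx₀K : x₀ ∈ K := (hT x₀ hx₀).1
  have hτ1 : τ ≤ 1 := by
    obtain ⟨-, u, v, hu, hv, -, -, hs⟩ := hT x₀ hx₀
    nlinarith [sq_nonneg (⟪u, v⟫ : ℝ), sq_nonneg (τ - 1)]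
  -- choose arcs
  have harc : ∀ t ∈ T, ∃ w : ℝ → EuclideanSpace ℝ (Fin d),
      (∀ θ, ‖w θ‖ = 1) ∧
      (∀ θ, 0 ≤ θ → θ ≤ τ → ∀ q ∈ K, ⟪q - t, w θ⟫ ≤ 0) ∧
      (∀ θ θ', ‖w θ - w θ'‖ ^ 2 = 2 - 2 * Real.cos (θ - θ')) := by
    intro t ht
    obtain ⟨-, u, v, hu, hv, hnu, hnv, hs⟩ := hT t ht
    exact exists_arc hτ hu hv hnu hnv hs
  choose w hw1 hw2 hw3 using harc
  set J : ℕ := ⌊1 / (20 * δ)⌋₊ + 1 with hJdef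
  set Kk : ℕ := ⌊τ / (4 * δ)⌋₊ with hKdef
  have hJ1 : (1:ℝ) / (20 * δ) ≤ J := by
    have := Nat.lt_floor_add_one (1 / (20 * δ))
    push_cast [hJdef]; linarith
  have hJ2 : 2 * δ * ((J:ℝ) - 1) ≤ 1 / 10 := by
    have h := Nat.floor_le (by positivity : (0:ℝ) ≤ 1 / (20 * δ))
    have : ((J:ℝ) - 1) = ⌊1 / (20 * δ)⌋₊ := by push_cast [hJdef]; ring
    rw [this]
    calc 2 * δ * (⌊1 / (20 * δ)⌋₊ : ℝ) ≤ 2 * δ * (1 / (20 * δ)) := by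
          apply mul_le_mul_of_nonneg_left h (by positivity)
      _ = 1 / 10 := by field_simp; ring
  have hK1 : τ / (8 * δ) ≤ (Kk:ℝ) := by
    have h := Nat.lt_floor_add_one (τ / (4 * δ))
    have h2 : (2:ℝ) ≤ τ / (4 * δ) := by
      rw [le_div_iff₀ (by positivity)]; linarith
    have : τ / (8 * δ) ≤ τ / (4 * δ) - 1 := by
      have : τ / (4 * δ) = 2 * (τ / (8 * δ)) := by ring
      rw [this] at h2 ⊢
      have h3 : (1:ℝ) ≤ τ / (8 * δ) := by linarith
      linarith
    rw [hKdef]; push_cast; linarith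
  have hK2 : 4 * δ * ((Kk:ℝ) - 1) ≤ τ - 4 * δ := by
    have h := Nat.floor_le (by positivity : (0:ℝ) ≤ τ / (4 * δ))
    have : 4 * δ * (Kk:ℝ) ≤ τ := by
      rw [hKdef]
      calc 4 * δ * (⌊τ / (4 * δ)⌋₊ : ℝ) ≤ 4 * δ * (τ / (4 * δ)) :=
            mul_le_mul_of_nonneg_left h (by positivity)
        _ = τ := by field_simp
    nlinarith
  -- index set and centers
  set I : Finset ({x // x ∈ T} × (ℕ × ℕ)) := T.attach ×ˢ (Finset.range J ×ˢ Finset.range Kk)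
    with hIdef
  set cen : {x // x ∈ T} × (ℕ × ℕ) → EuclideanSpace ℝ (Fin d) :=
    fun p => (p.1 : EuclideanSpace ℝ (Fin d)) +
      (6/5 + 2*δ*p.2.1) • w p.1 p.1.2 (4*δ*p.2.2) with hcen
  have hsrange : ∀ j : ℕ, j < J → 6/5 ≤ 6/5 + 2*δ*(j:ℝ) ∧ 6/5 + 2*δ*(j:ℝ) ≤ 13/10 := by
    intro j hj
    have h1 : (j:ℝ) ≤ (J:ℝ) - 1 := by
      have : (j:ℝ) + 1 ≤ (J:ℝ) := by exact_mod_cast hj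
      linarith
    constructor
    · nlinarith
    · nlinarith [mul_le_mul_of_nonneg_left h1 (by positivity : (0:ℝ) ≤ 2*δ)]
  have hθrange : ∀ k : ℕ, k < Kk → 0 ≤ 4*δ*(k:ℝ) ∧ 4*δ*(k:ℝ) ≤ τ - 4*δ := by
    intro k hk
    have h1 : (k:ℝ) ≤ (Kk:ℝ) - 1 := by
      have : (k:ℝ) + 1 ≤ (Kk:ℝ) := by exact_mod_cast hk
      linarith
    refine ⟨by positivity, ?_⟩
    nlinarith [mul_le_mul_of_nonneg_left h1 (by positivity : (0:ℝ) ≤ 4*δ)]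
  -- distance bound
  have hdist : ∀ p ∈ I, ∀ p' ∈ I, p ≠ p' → δ ≤ dist (cen p) (cen p') := by
    intro p hp p' hp' hne
    obtain ⟨⟨t, ht⟩, j, k⟩ := p
    obtain ⟨⟨t', ht'⟩, j', k'⟩ := p'
    simp only [hIdef, Finset.mem_product, Finset.mem_range, Finset.mem_attach, true_and] at hp hp'
    obtain ⟨hj, hk⟩ := hp
    obtain ⟨hj', hk'⟩ := hp'
    set s : ℝ := 6/5 + 2*δ*(j:ℝ) with hsdef
    set s' : ℝ := 6/5 + 2*δ*(j':ℝ) with hs'def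
    obtain ⟨hs1, hs2⟩ := hsrange j hj
    obtain ⟨hs1', hs2'⟩ := hsrange j' hj'
    rw [← hsdef] at hs1 hs2
    rw [← hs'def] at hs1' hs2'
    have hs0 : (0:ℝ) ≤ s := le_trans (by norm_num) hs1
    have hs0' : (0:ℝ) ≤ s' := le_trans (by norm_num) hs1'
    obtain ⟨hθ1, hθ2⟩ := hθrange k hk
    obtain ⟨hθ1', hθ2'⟩ := hθrange k' hk'
    set wi := w t ht (4*δ*(k:ℝ))
    set wi' := w t' ht' (4*δ*(k':ℝ))
    have hwin : ‖wi‖ = 1 := hw1 t ht _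
    have hwin' : ‖wi'‖ = 1 := hw1 t' ht' _
    have hδτ' : 4*δ*(k:ℝ) ≤ τ := by linarith
    have hδτ'' : 4*δ*(k':ℝ) ≤ τ := by linarith
    rw [dist_eq_norm]
    have hceq : cen (⟨t, ht⟩, j, k) - cen (⟨t', ht'⟩, j', k') =
        (t - t') + (s • wi - s' • wi') := by
      simp only [hcen]
      abel
    by_cases htt : t = t'
    · -- same base point
      subst htt
      have hsub : Subtype.mk t ht = Subtype.mk t ht' := rfl
      by_cases hjj : j = j'
      · -- same j, k ≠ k'
        subst hjj
        have hkk : k ≠ k' := by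
          intro h; apply hne; subst h; rfl
        have hs : s = s' := rfl
        rw [hceq]
        have : t - t = (0 : EuclideanSpace ℝ (Fin d)) := sub_self t
        rw [this, zero_add, ← hs]
        rw [← smul_sub, norm_smul]
        -- ‖wi - wi'‖ ≥ 15δ/4 roughly
        have hform := hw3 t ht (4*δ*(k:ℝ)) (4*δ*(k':ℝ))
        set Δ : ℝ := 4*δ*(k:ℝ) - 4*δ*(k':ℝ) with hΔ
        have hΔne : |Δ| = 4*δ*|((k:ℝ) - (k':ℝ))| := by
          rw [hΔ, ← mul_sub, abs_mul, abs_of_nonneg (by positivity : (0:ℝ) ≤ 4*δ)]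
        have hkabs : 1 ≤ |((k:ℝ) - (k':ℝ))| := by
          have hz : ((k:ℤ) - (k':ℤ)) ≠ 0 := by
            intro h; apply hkk; omega
          have h1 : (1:ℤ) ≤ |(k:ℤ) - (k':ℤ)| := Int.one_le_abs hz
          exact_mod_cast h1
        have hwieq : wi' = w t ht (4*δ*(k':ℝ)) := rfl
        have hΔlow : 4*δ ≤ |Δ| := by
          rw [hΔne]
          nlinarith
        have hΔup : |Δ| ≤ 1 := by
          rw [abs_le]
          constructor <;> nlinarith
        have hchord := chord_lower hδ hΔlow hΔup
        have hnormsq : ‖wi - wi'‖^2 = 2 - 2*Real.cos |Δ| := by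
          rw [hwieq, hw3 t ht _ _, ← hΔ, Real.cos_abs]
        have hn2 : (15/4*δ)^2 ≤ ‖wi - wi'‖^2 := by rw [hnormsq]; exact hchord
        have hnlow : 15/4*δ ≤ ‖wi - wi'‖ :=
          sq_le_imp (by linarith) (norm_nonneg _) hn2
        rw [Real.norm_eq_abs, abs_of_nonneg hs0]
        calc δ ≤ (6/5) * (15/4*δ) := by linarith
          _ ≤ s * ‖wi - wi'‖ :=
              mul_le_mul hs1 hnlow (by linarith) hs0
      · -- same t, j ≠ j'
        have hjj' : j ≠ j' := hjj
        rw [hceq, sub_self, zero_add]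
        have h1 : |‖s • wi‖ - ‖s' • wi'‖| ≤ ‖s • wi - s' • wi'‖ :=
          abs_norm_sub_norm_le _ _
        have h2 : ‖s • wi‖ = s := by
          rw [norm_smul, hwin, Real.norm_eq_abs, abs_of_nonneg hs0]
          ring
        have h3 : ‖s' • wi'‖ = s' := by
          rw [norm_smul, hwin', Real.norm_eq_abs, abs_of_nonneg hs0']
          ring
        have hjabs : 1 ≤ |((j:ℝ) - (j':ℝ))| := by
          have hz : ((j:ℤ) - (j':ℤ)) ≠ 0 := by
            intro h; apply hjj'; omega
          have h1' : (1:ℤ) ≤ |(j:ℤ) - (j':ℤ)| := Int.one_le_abs hz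
          exact_mod_cast h1'
        have h4 : 2*δ ≤ |s - s'| := by
          have : s - s' = 2*δ*((j:ℝ) - (j':ℝ)) := by rw [hsdef, hs'def]; ring
          rw [this, abs_mul, abs_of_nonneg (by positivity : (0:ℝ) ≤ 2*δ)]
          nlinarith
        rw [h2, h3] at h1
        calc δ ≤ |s - s'| := by linarith
          _ ≤ ‖s • wi - s' • wi'‖ := h1
    · -- t ≠ t'
      have htK : t ∈ K := (hT t ht).1
      have htK' : t' ∈ K := (hT t' ht').1
      have hi1 : 0 ≤ ⟪t - t', wi⟫ := by
        have h := hw2 t ht _ hθ1 hδτ' t' htK'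
        have heq : t - t' = -(t' - t) := by abel
        rw [heq, inner_neg_left]
        linarith
      have hi2 : ⟪t - t', wi'⟫ ≤ 0 := hw2 t' ht' _ hθ1' hδτ'' t htK
      have hkey := norm_add_ge t t' wi wi' s s' hs0 hs0' hi1 hi2
      have hdtt : 2*δ < ‖t - t'‖ := by
        rw [← dist_eq_norm]
        exact hsep t ht t' ht' htt
      rw [hceq]
      linarith
  -- disjointness of balls
  have hdisj : (↑I : Set ({x // x ∈ T} × (ℕ × ℕ))).PairwiseDisjoint
      (fun p => ball (cen p) (δ/2)) := by
    intro p hp p' hp' hne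
    have h := hdist p (by exact_mod_cast hp) p' (by exact_mod_cast hp') hne
    exact Metric.ball_disjoint_ball (by linarith)
  -- balls inside big ball
  have hball_sub : ∀ p ∈ I, ball (cen p) (δ/2) ⊆ closedBall x₀ (R+3) := by
    intro p hp y hy
    obtain ⟨⟨t, ht⟩, j, k⟩ := p
    simp only [hIdef, Finset.mem_product, Finset.mem_range, Finset.mem_attach, true_and] at hp
    obtain ⟨hj, hk⟩ := hp
    obtain ⟨hs1, hs2⟩ := hsrange j hj
    have htK : t ∈ K := (hT t ht).1
    have h1 : dist (cen (⟨t, ht⟩, j, k)) x₀ ≤ R + 13/10 := by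
      have : cen (⟨t, ht⟩, j, k) - x₀ = (t - x₀) + (6/5 + 2*δ*(j:ℝ)) • w t ht (4*δ*(k:ℝ)) := by
        simp only [hcen]; abel
      rw [dist_eq_norm, this]
      have h2 := norm_add_le (t - x₀) ((6/5 + 2*δ*(j:ℝ)) • w t ht (4*δ*(k:ℝ)))
      have h3 : ‖(6/5 + 2*δ*(j:ℝ)) • w t ht (4*δ*(k:ℝ))‖ = 6/5 + 2*δ*(j:ℝ) := by
        rw [norm_smul, hw1, Real.norm_eq_abs, abs_of_nonneg (by linarith)]
        ring
      have h4 : ‖t - x₀‖ ≤ R := by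
        rw [← dist_eq_norm]
        exact le_trans (dist_le_diam_of_mem hbd htK hx₀K) hdiam
      linarith
    rw [mem_closedBall]
    rw [mem_ball] at hy
    calc dist y x₀ ≤ dist y (cen (⟨t, ht⟩, j, k)) + dist (cen (⟨t, ht⟩, j, k)) x₀ :=
          dist_triangle _ _ _
      _ ≤ δ/2 + (R + 13/10) := by linarith [hy.le]
      _ ≤ R + 3 := by linarith
  -- volume estimates
  have hfr : Module.finrank ℝ (EuclideanSpace ℝ (Fin d)) = d := finrank_euclideanSpace_fin
  have hvol_ball : ∀ p : {x // x ∈ T} × (ℕ × ℕ),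
      ENNReal.ofReal ((δ/4)^d) * volume (closedBall (0 : EuclideanSpace ℝ (Fin d)) 1)
        ≤ volume (ball (cen p) (δ/2)) := by
    intro p
    have h1 : closedBall (cen p) (δ/4) ⊆ ball (cen p) (δ/2) :=
      closedBall_subset_ball (by linarith)
    have h2 := measure_mono (μ := volume) h1
    rw [MeasureTheory.Measure.addHaar_closedBall' volume (cen p)
      (by positivity : (0:ℝ) ≤ δ/4), hfr] at h2
    exact h2
  have hbig : volume (closedBall x₀ (R+3))
      = ENNReal.ofReal ((R+3)^d) * volume (closedBall (0 : EuclideanSpace ℝ (Fin d)) 1) := by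
    rw [MeasureTheory.Measure.addHaar_closedBall' volume x₀ (by linarith : (0:ℝ) ≤ R+3), hfr]
  have hunion : ∑ p ∈ I, volume (ball (cen p) (δ/2)) ≤ volume (closedBall x₀ (R+3)) := by
    rw [← measure_biUnion_finset hdisj (fun p _ => measurableSet_ball)]
    exact measure_mono (Set.iUnion₂_subset hball_sub)
  have hcount : (I.card : ℝ≥0∞) *
      (ENNReal.ofReal ((δ/4)^d) * volume (closedBall (0 : EuclideanSpace ℝ (Fin d)) 1))
      ≤ ∑ p ∈ I, volume (ball (cen p) (δ/2)) := by
    calc (I.card : ℝ≥0∞) * (ENNReal.ofReal ((δ/4)^d) * volume (closedBall (0:EuclideanSpace ℝ (Fin d)) 1))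
        = ∑ _p ∈ I, (ENNReal.ofReal ((δ/4)^d) * volume (closedBall (0:EuclideanSpace ℝ (Fin d)) 1)) := by
          rw [Finset.sum_const, nsmul_eq_mul]
      _ ≤ ∑ p ∈ I, volume (ball (cen p) (δ/2)) := Finset.sum_le_sum (fun p _ => hvol_ball p)
  have hV1 : volume (closedBall (0 : EuclideanSpace ℝ (Fin d)) 1) ≠ 0 :=
    (measure_closedBall_pos volume _ one_pos).ne'
  have hV2 : volume (closedBall (0 : EuclideanSpace ℝ (Fin d)) 1) ≠ ⊤ :=
    measure_closedBall_lt_top.ne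
  have hkey : (I.card : ℝ≥0∞) * ENNReal.ofReal ((δ/4)^d) ≤ ENNReal.ofReal ((R+3)^d) := by
    rw [← ENNReal.mul_le_mul_iff_left hV1 hV2]
    calc (I.card : ℝ≥0∞) * ENNReal.ofReal ((δ/4)^d) * volume (closedBall (0:EuclideanSpace ℝ (Fin d)) 1)
        = (I.card : ℝ≥0∞) * (ENNReal.ofReal ((δ/4)^d) * volume (closedBall (0:EuclideanSpace ℝ (Fin d)) 1)) := by
          ring
      _ ≤ ∑ p ∈ I, volume (ball (cen p) (δ/2)) := hcount
      _ ≤ volume (closedBall x₀ (R+3)) := hunion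
      _ = ENNReal.ofReal ((R+3)^d) * volume (closedBall (0:EuclideanSpace ℝ (Fin d)) 1) := hbig
  have hreal : (I.card : ℝ) * (δ/4)^d ≤ (R+3)^d := by
    have h1 : (I.card : ℝ≥0∞) = ENNReal.ofReal (I.card : ℝ) := by
      rw [ENNReal.ofReal_natCast]
    rw [h1, ← ENNReal.ofReal_mul (by positivity)] at hkey
    exact (ENNReal.ofReal_le_ofReal_iff (by positivity)).1 hkey
  have hcard : (I.card : ℝ) = (T.card : ℝ) * ((J:ℝ) * (Kk:ℝ)) := by
    simp only [hIdef, Finset.card_product, Finset.card_attach, Finset.card_range]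
    push_cast; ring
  rw [hcard] at hreal
  -- final arithmetic
  have hJpos : (0:ℝ) < J := by positivity
  have hKpos : (0:ℝ) < Kk := by
    have : (0:ℝ) < τ / (8*δ) := by positivity
    linarith
  have hδ4 : ((δ/4:ℝ))^d = δ^m * δ^2 / 4^d := by
    rw [hdm, div_pow]; ring
  rw [hδ4] at hreal
  have hJK : τ/(160*δ^2) ≤ (J:ℝ)*(Kk:ℝ) := by
    calc τ/(160*δ^2) = (1/(20*δ)) * (τ/(8*δ)) := by
          rw [div_mul_div_comm, one_mul]
          norm_num
          ring_nf
      _ ≤ (J:ℝ)*(Kk:ℝ) := by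
          apply mul_le_mul hJ1 hK1 (by positivity) (by positivity)
  have hmono : (T.card : ℝ) * (τ/(160*δ^2)) * (δ^m*δ^2/4^d)
      ≤ (T.card : ℝ) * ((J:ℝ)*(Kk:ℝ)) * (δ^m*δ^2/4^d) := by
    apply mul_le_mul_of_nonneg_right _ (by positivity)
    apply mul_le_mul_of_nonneg_left hJK (by positivity)
  have hid : (T.card : ℝ) * (τ/(160*δ^2)) * (δ^m*δ^2/4^d)
      = (T.card : ℝ) * (τ * δ^m) / (160*4^d) := by
    field_simp
  have hfin : (T.card : ℝ) * (τ * δ^m) / (160*4^d) ≤ (R+3)^d := by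
    rw [← hid]; linarith
  rw [div_le_iff₀ (by positivity : (0:ℝ) < 160*4^d)] at hfin
  calc (T.card : ℝ) * (τ * δ^m) ≤ (R+3)^d * (160*4^d) := hfin
    _ = 160 * 4^d * (R+3)^d := by ring

private lemma ediam_closedBall_le {E : Type*} [PseudoMetricSpace E] (x : E) {r : ℝ} :
    EMetric.diam (Metric.closedBall x r) ≤ ENNReal.ofReal (2*r) := by
  apply EMetric.diam_le
  intro a ha b hb
  rw [Metric.mem_closedBall] at ha hb
  rw [edist_dist]
  apply ENNReal.ofReal_le_ofReal
  calc dist a b ≤ dist a x + dist x b := dist_triangle _ _ _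
    _ ≤ r + r := by rw [dist_comm x b]; exact add_le_add ha hb
    _ = 2*r := by ring

/-- Proposition: the set of τ-singular boundary points of a compact convex set K of
ℝ^d has ℋ^{d-2}-measure at most const(d, diam K)/τ. -/
theorem hausdorff_measure_singular_points
    (d : ℕ) (R : ℝ) :
    ∃ C : ℝ, ∀ K : Set (EuclideanSpace ℝ (Fin d)),
      Convex ℝ K → IsCompact K → diam K ≤ R →
      ∀ τ : ℝ, 0 < τ →
        μH[(d : ℝ) - 2]
          {x : EuclideanSpace ℝ (Fin d) | x ∈ frontier K ∧
            ∃ u v : EuclideanSpace ℝ (Fin d), ‖u‖ = 1 ∧ ‖v‖ = 1 ∧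
              (∀ q ∈ K, (inner ℝ (q - x) u : ℝ) ≤ 0) ∧
              (∀ q ∈ K, (inner ℝ (q - x) v : ℝ) ≤ 0) ∧
              (inner ℝ u v : ℝ) ^ 2 ≤ 1 - τ ^ 2} ≤
        ENNReal.ofReal (C / τ) := by
  refine ⟨160 * 16 ^ d * (|R| + 3) ^ d, ?_⟩
  intro K hconv hcomp hdiam τ hτ
  set Sg : Set (EuclideanSpace ℝ (Fin d)) :=
    {x : EuclideanSpace ℝ (Fin d) | x ∈ frontier K ∧
      ∃ u v : EuclideanSpace ℝ (Fin d), ‖u‖ = 1 ∧ ‖v‖ = 1 ∧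
        (∀ q ∈ K, (inner ℝ (q - x) u : ℝ) ≤ 0) ∧
        (∀ q ∈ K, (inner ℝ (q - x) v : ℝ) ≤ 0) ∧
        (inner ℝ u v : ℝ) ^ 2 ≤ 1 - τ ^ 2} with hSg
  rcases Set.eq_empty_or_nonempty Sg with hE | hNE
  · rw [hE, measure_empty]
    exact zero_le
  rcases Nat.lt_or_ge d 2 with hd2 | hd2
  · -- d = 0 or 1 : singular set is empty, contradiction with hNE
    exfalso
    obtain ⟨x, hxf, u, v, hu, hv, hnu, hnv, hs⟩ := hNE
    interval_cases d
    · have h0 : u = 0 := Subsingleton.elim u 0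
      rw [h0, norm_zero] at hu
      exact zero_ne_one hu
    · have huu : (inner ℝ u u : ℝ) = 1 := by
        rw [real_inner_self_eq_norm_sq, hu]; norm_num
      have hvv : (inner ℝ v v : ℝ) = 1 := by
        rw [real_inner_self_eq_norm_sq, hv]; norm_num
      have hfu : (inner ℝ u u : ℝ) = u 0 * u 0 := by
        rw [PiLp.inner_apply]
        simp [RCLike.inner_apply, Fin.sum_univ_one, conj_trivial]
        ring
      have hfv : (inner ℝ v v : ℝ) = v 0 * v 0 := by
        rw [PiLp.inner_apply]
        simp [RCLike.inner_apply, Fin.sum_univ_one, conj_trivial]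
        ring
      have hfuv : (inner ℝ u v : ℝ) = u 0 * v 0 := by
        simp [PiLp.inner_apply, RCLike.inner_apply, Fin.sum_univ_one, conj_trivial]
        ring
      have ha : u 0 * u 0 = 1 := by rw [← hfu]; exact huu
      have hb : v 0 * v 0 = 1 := by rw [← hfv]; exact hvv
      have h1 : (inner ℝ u v : ℝ) ^ 2 = 1 := by
        rw [hfuv]
        calc (u 0 * v 0) ^ 2 = (u 0 * u 0) * (v 0 * v 0) := by ring
          _ = 1 := by rw [ha, hb, one_mul]
      rw [h1] at hs
      nlinarith
  -- main case : d ≥ 2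
  obtain ⟨m, hm⟩ : ∃ m, d = m + 2 := ⟨d - 2, by omega⟩
  have hKne : K.Nonempty := by
    obtain ⟨x, hxf, -⟩ := hNE
    exact ⟨x, (hcomp.isClosed.closure_eq ▸ frontier_subset_closure (s := K)) hxf⟩
  have hR0 : 0 ≤ R := le_trans diam_nonneg hdiam
  have habsR : |R| = R := abs_of_nonneg hR0
  have hbd : Bornology.IsBounded K := hcomp.isBounded
  have hKsubSg : ∀ x ∈ Sg, x ∈ K := by
    intro x hx
    exact (hcomp.isClosed.closure_eq ▸ frontier_subset_closure (s := K)) hx.1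
  have hexp : ((d : ℝ) - 2) = ((m : ℕ) : ℝ) := by rw [hm]; push_cast; ring
  -- For every suitable δ there is a maximal 2δ-separated set giving a good cover.
  classical
  set A : ℝ := 160 * 4 ^ d * (R + 3) ^ d with hA
  have hmain : ∀ δ : ℝ, 0 < δ → δ ≤ τ/8 → δ ≤ 1/50 →
      ∃ T : Finset (EuclideanSpace ℝ (Fin d)),
        (Sg ⊆ ⋃ t ∈ T, closedBall t (2*δ)) ∧ (T.card : ℝ) * (τ * δ ^ m) ≤ A := by
    intro δ hδ0 hδτ hδ1
    have hbound : ∀ T : Finset (EuclideanSpace ℝ (Fin d)), (↑T ⊆ Sg) →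
        (∀ t ∈ T, ∀ t' ∈ T, t ≠ t' → 2*δ < dist t t') →
        (T.card : ℝ) * (τ * δ ^ m) ≤ A := by
      intro T hTs hTsep
      refine packing hm hbd hR0 hdiam hτ hδ0 hδτ hδ1 T ?_ hTsep
      intro t ht
      have htSg : t ∈ Sg := hTs ht
      obtain ⟨-, u, v, hu, hv, hnu, hnv, hs⟩ := htSg
      exact ⟨hKsubSg t (hTs ht), u, v, hu, hv, hnu, hnv, hs⟩
    have hδm : (0:ℝ) < τ * δ ^ m := by positivity
    have hNbd : ∀ T : Finset (EuclideanSpace ℝ (Fin d)), (↑T ⊆ Sg) →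
        (∀ t ∈ T, ∀ t' ∈ T, t ≠ t' → 2*δ < dist t t') →
        T.card ≤ ⌊A / (τ * δ ^ m)⌋₊ := by
      intro T h1 h2
      apply Nat.le_floor
      rw [le_div_iff₀ hδm]
      exact hbound T h1 h2
    set S : Set ℕ := {n : ℕ | ∃ T : Finset (EuclideanSpace ℝ (Fin d)),
      (↑T ⊆ Sg) ∧ (∀ t ∈ T, ∀ t' ∈ T, t ≠ t' → 2*δ < dist t t') ∧ T.card = n} with hS
    have hS0 : 0 ∈ S := ⟨∅, by simp⟩
    have hSbdd : BddAbove S := by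
      refine ⟨⌊A / (τ * δ ^ m)⌋₊, ?_⟩
      rintro n ⟨T, h1, h2, rfl⟩
      exact hNbd T h1 h2
    have hSup : sSup S ∈ S := Nat.sSup_mem ⟨0, hS0⟩ hSbdd
    obtain ⟨T, hTs, hTsep, hTcard⟩ := hSup
    refine ⟨T, ?_, hbound T hTs hTsep⟩
    -- maximality gives covering
    intro x hx
    by_contra hcon
    simp only [Set.mem_iUnion, mem_closedBall, not_exists, not_le] at hcon
    have hxT : x ∉ T := by
      intro hxT
      have := hcon x hxT
      simp at this
      linarith
    have hT' : (↑(insert x T) : Set _) ⊆ Sg := by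
      rw [Finset.coe_insert]
      exact Set.insert_subset hx hTs
    have hT'sep : ∀ t ∈ insert x T, ∀ t' ∈ insert x T, t ≠ t' → 2*δ < dist t t' := by
      intro a ha b hb hab
      rcases Finset.mem_insert.1 ha with rfl | ha' <;>
        rcases Finset.mem_insert.1 hb with rfl | hb'
      · exact absurd rfl hab
      · exact hcon b hb'
      · rw [dist_comm]
        exact hcon a ha'
      · exact hTsep a ha' b hb' hab
    have hmem : T.card + 1 ∈ S := by
      refine ⟨insert x T, hT', hT'sep, ?_⟩
      rw [Finset.card_insert_of_notMem hxT]
    have : T.card + 1 ≤ sSup S := le_csSup hSbdd hmem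
    omega
  -- sequence of scales
  set δs : ℕ → ℝ := fun n => min (min (τ/8) (1/50)) ((1:ℝ)/(n+1)) with hδs
  have hδs0 : ∀ n, 0 < δs n := by
    intro n
    exact lt_min (lt_min (by positivity) (by norm_num)) (by positivity)
  have hδsτ : ∀ n, δs n ≤ τ/8 := fun n => le_trans (min_le_left _ _) (min_le_left _ _)
  have hδs1 : ∀ n, δs n ≤ 1/50 := fun n => le_trans (min_le_left _ _) (min_le_right _ _)
  have hδsn : ∀ n, δs n ≤ 1/(n+1) := fun n => min_le_right _ _
  choose T hTcov hTbd using fun n => hmain (δs n) (hδs0 n) (hδsτ n) (hδs1 n)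
  -- apply the liminf bound
  have hr0 : Filter.Tendsto (fun n : ℕ => ENNReal.ofReal (4 * δs n)) Filter.atTop (nhds 0) := by
    rw [← ENNReal.ofReal_zero]
    apply ENNReal.tendsto_ofReal
    have h1 : Filter.Tendsto (fun n : ℕ => 4 * (1/((n:ℝ)+1))) Filter.atTop (nhds 0) := by
      have := tendsto_one_div_add_atTop_nhds_zero_nat.const_mul (4:ℝ)
      simpa using this
    apply squeeze_zero (fun n => by positivity) (fun n => ?_) h1
    have := hδsn n
    nlinarith [hδs0 n]
  have hcover : μH[(d : ℝ) - 2] Sg ≤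
      Filter.liminf (fun n => ∑' (i : {x // x ∈ T n}),
        EMetric.diam (closedBall (i : EuclideanSpace ℝ (Fin d)) (2 * δs n)) ^ ((d:ℝ) - 2))
        Filter.atTop := by
    apply MeasureTheory.Measure.hausdorffMeasure_le_liminf_tsum
      (ι := fun n => {x // x ∈ T n}) ((d:ℝ) - 2) Sg
      (fun n => ENNReal.ofReal (4 * δs n)) hr0
      (fun n i => closedBall (i : EuclideanSpace ℝ (Fin d)) (2 * δs n))
    · -- diameters
      refine Filter.Eventually.of_forall fun n => fun i => ?_
      refine le_trans (ediam_closedBall_le _) ?_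
      apply ENNReal.ofReal_le_ofReal
      nlinarith [hδs0 n]
    · -- covering
      refine Filter.Eventually.of_forall fun n => ?_
      intro x hx
      have := hTcov n hx
      simp only [Set.mem_iUnion, mem_closedBall] at this ⊢
      obtain ⟨t, ht, hdist⟩ := this
      exact ⟨⟨t, ht⟩, hdist⟩
  refine le_trans hcover ?_
  have hsumbd : ∀ n : ℕ, (∑' (i : {x // x ∈ T n}),
      EMetric.diam (closedBall (i : EuclideanSpace ℝ (Fin d)) (2 * δs n)) ^ ((d:ℝ) - 2))
      ≤ ENNReal.ofReal ((160 * 16 ^ d * (|R| + 3) ^ d) / τ) := by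
    intro n
    set δ : ℝ := δs n with hδdef
    have hδ0 : 0 < δ := hδs0 n
    have hterm : ∀ i : {x // x ∈ T n},
        EMetric.diam (closedBall (i : EuclideanSpace ℝ (Fin d)) (2 * δ)) ^ ((d:ℝ) - 2)
          ≤ ENNReal.ofReal ((4*δ)^m) := by
      intro i
      have h1 : EMetric.diam (closedBall (i : EuclideanSpace ℝ (Fin d)) (2 * δ))
          ≤ ENNReal.ofReal (4*δ) := by
        refine le_trans (ediam_closedBall_le _) ?_
        apply ENNReal.ofReal_le_ofReal
        nlinarith
      calc EMetric.diam (closedBall (i : EuclideanSpace ℝ (Fin d)) (2 * δ)) ^ ((d:ℝ) - 2)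
          = EMetric.diam (closedBall (i : EuclideanSpace ℝ (Fin d)) (2 * δ)) ^ (m : ℕ) := by
            rw [hexp, ENNReal.rpow_natCast]
        _ ≤ (ENNReal.ofReal (4*δ)) ^ (m : ℕ) := pow_le_pow_left₀ zero_le h1 m
        _ = ENNReal.ofReal ((4*δ)^m) := by
            rw [ENNReal.ofReal_pow (by positivity)]
    calc (∑' (i : {x // x ∈ T n}),
        EMetric.diam (closedBall (i : EuclideanSpace ℝ (Fin d)) (2 * δ)) ^ ((d:ℝ) - 2))
        ≤ ∑' (_ : {x // x ∈ T n}), ENNReal.ofReal ((4*δ)^m) := ENNReal.tsum_le_tsum hterm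
      _ = ((T n).card : ℝ≥0∞) * ENNReal.ofReal ((4*δ)^m) := by
          rw [tsum_fintype, Finset.sum_const, Finset.card_univ, Fintype.card_coe,
            nsmul_eq_mul]
      _ ≤ ENNReal.ofReal ((160 * 16 ^ d * (|R| + 3) ^ d) / τ) := by
          rw [show (((T n).card : ℝ≥0∞) = ENNReal.ofReal ((T n).card : ℝ)) from
            (ENNReal.ofReal_natCast _).symm, ← ENNReal.ofReal_mul (by positivity)]
          apply ENNReal.ofReal_le_ofReal
          -- real arithmetic
          have hb := hTbd n
          have h4 : ((T n).card : ℝ) * (4*δ)^m * τ = ((T n).card : ℝ) * (τ * δ^m) * 4^m := by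
            rw [mul_pow]; ring
          have h5 : ((T n).card : ℝ) * (4*δ)^m * τ ≤ A * 4^m := by
            rw [h4]
            apply mul_le_mul_of_nonneg_right hb (by positivity)
          have h6 : A * 4^m ≤ 160 * 16^d * (|R| + 3)^d := by
            rw [hA, habsR]
            have h7 : (4:ℝ)^m ≤ 4^d := by
              apply pow_le_pow_right₀ (by norm_num)
              omega
            calc 160 * 4^d * (R+3)^d * 4^m ≤ 160 * 4^d * (R+3)^d * 4^d := by
                  apply mul_le_mul_of_nonneg_left h7 (by positivity)
              _ = 160 * 16^d * (R+3)^d := by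
                  rw [show ((16:ℝ)^d = 4^d * 4^d) by rw [← mul_pow]; norm_num]
                  ring
          rw [le_div_iff₀ hτ]
          exact le_trans h5 h6
  refine le_trans (Filter.liminf_le_liminf (Filter.Eventually.of_forall hsumbd)) ?_
  exact le_of_eq (Filter.liminf_const _)
end
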